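/- arXiv:1709.09942 — 6 statements merged into one kernel-verified Lean document; each statement's English description precedes it below -/
import Mathlib

section
/- Let G be an lcsc group and let Λ = Λ(G,H,Γ,W) be a uniform model set in G (W ⊆ H compact with nonempty interior). Then there exist an lcsc group M whose quotient by its identity component is compact (M almost connected), a uniform cut-and-project scheme (G, M, Γ_M), a compact set W_M ⊆ M with nonempty interior, and a finite set F ⊆ π_G(Γ) such that, writing Σ := Λ(G, M, Γ_M, W_M), one has Λ ⊆ F·Σ and every x ∈ F quasi-commensurates Σ: there is a finite set F_x ⊆ π_G(Γ) with xΣ ⊆ ΣF_x and Σx ⊆ F_xΣ. In particular, every Meyer set is contained in a finite union of left-translates of a model set of almost connected type. -/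
/-- A packaged locally compact second countable Hausdorff topological group,
equipped with its Borel structure. -/
structure LCSCGroupPack where
  carrier : Type
  [grp : Group carrier]
  [top : TopologicalSpace carrier]
  [tgrp : IsTopologicalGroup carrier]
  [t2 : T2Space carrier]
  [lc : LocallyCompactSpace carrier]
  [sc : SecondCountableTopology carrier]
  [mb : MeasurableSpace carrier]
  [bs : BorelSpace carrier]

attribute [instance] LCSCGroupPack.grp LCSCGroupPack.top LCSCGroupPack.tgrp LCSCGroupPack.t2
  LCSCGroupPack.lc LCSCGroupPack.sc LCSCGroupPack.mb LCSCGroupPack.bs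

open MeasureTheory Set
open scoped Pointwise ENNReal

/-- A subset of a topological group is relatively dense if finitely many "translates"
by a compact set cover the group: `A * K = G` for some compact `K`. -/
def RelativelyDense {G : Type*} [Group G] [TopologicalSpace G] (A : Set G) : Prop :=
  ∃ K : Set G, IsCompact K ∧ A * K = Set.univ

/-- A uniform lattice: a discrete, cocompact subgroup. -/
def IsUniformLattice {G : Type*} [Group G] [TopologicalSpace G] (Γ : Subgroup G) : Prop :=
  DiscreteTopology Γ ∧ RelativelyDense (Γ : Set G)

/-- A uniform cut-and-project scheme: `Γ ≤ G × H` is a uniform lattice projecting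
injectively to `G` and densely to `H`. -/
structure IsCutAndProject {G H : Type*} [Group G] [TopologicalSpace G] [Group H]
    [TopologicalSpace H] (Γ : Subgroup (G × H)) : Prop where
  lattice : IsUniformLattice Γ
  inj : ∀ x y : Γ, (x : G × H).1 = (y : G × H).1 → x = y
  dense_proj : Dense (Prod.snd '' (Γ : Set (G × H)))

/-- The model set `Λ(G,H,Γ,W) = π_G (Γ ∩ (G × W))`. -/
def modelSet {G H : Type*} [Group G] [TopologicalSpace G] [Group H] [TopologicalSpace H]
    (Γ : Subgroup (G × H)) (W : Set H) : Set G :=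
  Prod.fst '' ((Γ : Set (G × H)) ∩ (Set.univ ×ˢ W))

/-- A regular symmetric window containing the identity: compact, symmetric, `1 ∈ W`,
with dense interior, Haar-null boundary, boundary disjoint from `π_H(Γ)`, and aperiodic. -/
def IsRegularWindow {G : Type*} [Group G] [TopologicalSpace G] (H : Type*) [Group H]
    [TopologicalSpace H] [MeasurableSpace H] (Γ : Subgroup (G × H)) (W : Set H) : Prop :=
  IsCompact W ∧ W⁻¹ = W ∧ (1 : H) ∈ W ∧ W ⊆ closure (interior W) ∧
  (∀ μH : Measure H, μH.IsHaarMeasure → μH (frontier W) = 0) ∧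
  frontier W ∩ (Prod.snd '' (Γ : Set (G × H))) = ∅ ∧
  (∀ h : H, (fun w => h * w) '' W = W → h = 1)

/-- `Λ` is a symmetric Meyer set containing the identity in `G`: a relatively dense
symmetric subset containing `1` of a regular symmetric uniform model set. -/
def IsSymmetricMeyer (G : Type) [Group G] [TopologicalSpace G] (Λ : Set G) : Prop :=
  Λ⁻¹ = Λ ∧ (1 : G) ∈ Λ ∧ RelativelyDense Λ ∧
  ∃ (H : LCSCGroupPack) (Γ : Subgroup (G × H.carrier)) (W : Set H.carrier),
    IsCutAndProject Γ ∧ IsRegularWindow H.carrier Γ W ∧ Λ ⊆ modelSet Γ W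

/-- Every `L^p`-cocycle on the (abstract) group `Γ` is bounded on `A`. -/
def BddLpCocyclesOn (p : ℝ≥0∞) (hp : 1 ≤ p) (Γ : Type*) [Group Γ] (A : Set Γ) : Prop :=
  haveI : Fact (1 ≤ p) := ⟨hp⟩
  ∀ (Y : Type) [MeasurableSpace Y] [StandardBorelSpace Y] (μ : Measure Y) [SigmaFinite μ]
    (π : Γ →* (Lp ℝ p μ ≃ₗᵢ[ℝ] Lp ℝ p μ)) (b : Γ → Lp ℝ p μ),
    (∀ g h : Γ, b (g * h) = b g + (π g) (b h)) →
    ∃ C : ℝ, ∀ x ∈ A, ‖b x‖ ≤ C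

/-- Every weak `L^p`-quasi-cocycle on the (abstract) group `Γ` is bounded on `A`. -/
def WqBddOn (p : ℝ≥0∞) (hp : 1 ≤ p) (Γ : Type*) [Group Γ] (A : Set Γ) : Prop :=
  haveI : Fact (1 ≤ p) := ⟨hp⟩
  ∀ (Y : Type) [MeasurableSpace Y] [StandardBorelSpace Y] (μ : Measure Y) [SigmaFinite μ]
    (π : Γ → (Lp ℝ p μ ≃ₗᵢ[ℝ] Lp ℝ p μ)) (b : Γ → Lp ℝ p μ),
    (∃ D : ℝ, ∀ g h : Γ, ‖b (g * h) - b g - (π g) (b h)‖ ≤ D) →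
    ∃ C : ℝ, ∀ x ∈ A, ‖b x‖ ≤ C

/-- Property (FL^p) for a topological group: every continuous `L^p`-cocycle is bounded. -/
def HasFLp (p : ℝ≥0∞) (hp : 1 ≤ p) (G : Type*) [Group G] [TopologicalSpace G] : Prop :=
  haveI : Fact (1 ≤ p) := ⟨hp⟩
  ∀ (Y : Type) [MeasurableSpace Y] [StandardBorelSpace Y] (μ : Measure Y) [SigmaFinite μ]
    (π : G →* (Lp ℝ p μ ≃ₗᵢ[ℝ] Lp ℝ p μ)) (b : G → Lp ℝ p μ),
    (∀ g h : G, b (g * h) = b g + (π g) (b h)) →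
    Continuous b → (∀ v, Continuous fun g => (π g) v) →
    ∃ C : ℝ, ∀ g : G, ‖b g‖ ≤ C

/-- Property (FFFL^p): every Borel weak `L^p`-quasi-cocycle is bounded. -/
def HasFFFLp (p : ℝ≥0∞) (hp : 1 ≤ p) (G : Type*) [Group G] [TopologicalSpace G]
    [MeasurableSpace G] : Prop :=
  haveI : Fact (1 ≤ p) := ⟨hp⟩
  ∀ (Y : Type) [MeasurableSpace Y] [StandardBorelSpace Y] (μ : Measure Y) [SigmaFinite μ]
    (π : G → (Lp ℝ p μ ≃ₗᵢ[ℝ] Lp ℝ p μ)) (b : G → Lp ℝ p μ),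
    (∃ D : ℝ, ∀ g h : G, ‖b (g * h) - b g - (π g) (b h)‖ ≤ D) →
    (∀ U : Set (Lp ℝ p μ), IsOpen U → MeasurableSet (b ⁻¹' U)) →
    (∀ (v : Lp ℝ p μ) (U : Set (Lp ℝ p μ)), IsOpen U →
      MeasurableSet ((fun g => (π g) v) ⁻¹' U)) →
    ∃ C : ℝ, ∀ g : G, ‖b g‖ ≤ C

/-- a-FL^p-menability of a topological group: there is a continuous `L^p`-cocycle
all of whose sublevel sets have compact closure. -/
def AFLpMenable (p : ℝ≥0∞) (hp : 1 ≤ p) (G : Type*) [Group G] [TopologicalSpace G] : Prop :=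
  haveI : Fact (1 ≤ p) := ⟨hp⟩
  ∃ (Y : Type) (mY : MeasurableSpace Y) (μ : @Measure Y mY),
    @StandardBorelSpace Y mY ∧ SigmaFinite μ ∧
    ∃ (π : G →* (Lp ℝ p μ ≃ₗᵢ[ℝ] Lp ℝ p μ)) (b : G → Lp ℝ p μ),
      (∀ g h : G, b (g * h) = b g + (π g) (b h)) ∧
      Continuous b ∧ (∀ v, Continuous fun g => (π g) v) ∧
      ∀ C : ℝ, IsCompact (closure {g : G | ‖b g‖ ≤ C})

/-- a-FFFL^p-menability of a topological group: there is a Borel weak `L^p`-quasi-cocycle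
all of whose sublevel sets have compact closure. -/
def AFFFLpMenable (p : ℝ≥0∞) (hp : 1 ≤ p) (G : Type*) [Group G] [TopologicalSpace G]
    [MeasurableSpace G] : Prop :=
  haveI : Fact (1 ≤ p) := ⟨hp⟩
  ∃ (Y : Type) (mY : MeasurableSpace Y) (μ : @Measure Y mY),
    @StandardBorelSpace Y mY ∧ SigmaFinite μ ∧
    ∃ (π : G → (Lp ℝ p μ ≃ₗᵢ[ℝ] Lp ℝ p μ)) (b : G → Lp ℝ p μ),
      (∃ D : ℝ, ∀ g h : G, ‖b (g * h) - b g - (π g) (b h)‖ ≤ D) ∧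
      (∀ U : Set (Lp ℝ p μ), IsOpen U → MeasurableSet (b ⁻¹' U)) ∧
      (∀ (v : Lp ℝ p μ) (U : Set (Lp ℝ p μ)), IsOpen U →
        MeasurableSet ((fun g => (π g) v) ⁻¹' U)) ∧
      ∀ C : ℝ, IsCompact (closure {g : G | ‖b g‖ ≤ C})

/-- There is an `L^p`-cocycle on the subgroup generated by `Λ` whose sublevel sets
along `Λ` have compact closure in `G`. -/
def ExistsLpCocycleProperOnSubset (p : ℝ≥0∞) (hp : 1 ≤ p) {G : Type*} [Group G]
    [TopologicalSpace G] (Λ : Set G) : Prop :=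
  haveI : Fact (1 ≤ p) := ⟨hp⟩
  ∃ (Y : Type) (mY : MeasurableSpace Y) (μ : @Measure Y mY),
    @StandardBorelSpace Y mY ∧ SigmaFinite μ ∧
    ∃ (π : ↥(Subgroup.closure Λ) →* (Lp ℝ p μ ≃ₗᵢ[ℝ] Lp ℝ p μ))
      (b : ↥(Subgroup.closure Λ) → Lp ℝ p μ),
      (∀ g h : ↥(Subgroup.closure Λ), b (g * h) = b g + (π g) (b h)) ∧
      ∀ C : ℝ, IsCompact (closure (Subtype.val ''
        {x : ↥(Subgroup.closure Λ) | (x : G) ∈ Λ ∧ ‖b x‖ ≤ C}))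

/-- There is a weak `L^p`-quasi-cocycle on the subgroup generated by `Λ` whose sublevel
sets along `Λ` have compact closure in `G`. -/
def ExistsWqCocycleProperOnSubset (p : ℝ≥0∞) (hp : 1 ≤ p) {G : Type*} [Group G]
    [TopologicalSpace G] (Λ : Set G) : Prop :=
  haveI : Fact (1 ≤ p) := ⟨hp⟩
  ∃ (Y : Type) (mY : MeasurableSpace Y) (μ : @Measure Y mY),
    @StandardBorelSpace Y mY ∧ SigmaFinite μ ∧
    ∃ (π : ↥(Subgroup.closure Λ) → (Lp ℝ p μ ≃ₗᵢ[ℝ] Lp ℝ p μ))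
      (b : ↥(Subgroup.closure Λ) → Lp ℝ p μ),
      (∃ D : ℝ, ∀ g h : ↥(Subgroup.closure Λ), ‖b (g * h) - b g - (π g) (b h)‖ ≤ D) ∧
      ∀ C : ℝ, IsCompact (closure (Subtype.val ''
        {x : ↥(Subgroup.closure Λ) | (x : G) ∈ Λ ∧ ‖b x‖ ≤ C}))

/-- There is an `L^p`-cocycle on `Δ` which is proper on `A` in the discrete sense:
all sublevel sets along `A` are finite. -/
def ExistsLpCocycleFinProperOn (p : ℝ≥0∞) (hp : 1 ≤ p) (Δ : Type*) [Group Δ]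
    (A : Set Δ) : Prop :=
  haveI : Fact (1 ≤ p) := ⟨hp⟩
  ∃ (Y : Type) (mY : MeasurableSpace Y) (μ : @Measure Y mY),
    @StandardBorelSpace Y mY ∧ SigmaFinite μ ∧
    ∃ (π : Δ →* (Lp ℝ p μ ≃ₗᵢ[ℝ] Lp ℝ p μ)) (b : Δ → Lp ℝ p μ),
      (∀ g h : Δ, b (g * h) = b g + (π g) (b h)) ∧
      ∀ C : ℝ, 0 < C → {x ∈ A | ‖b x‖ ≤ C}.Finite

/-- There is a weak `L^p`-quasi-cocycle on `Δ` which is proper on `A` in the discrete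
sense: all sublevel sets along `A` are finite. -/
def ExistsWqCocycleFinProperOn (p : ℝ≥0∞) (hp : 1 ≤ p) (Δ : Type*) [Group Δ]
    (A : Set Δ) : Prop :=
  haveI : Fact (1 ≤ p) := ⟨hp⟩
  ∃ (Y : Type) (mY : MeasurableSpace Y) (μ : @Measure Y mY),
    @StandardBorelSpace Y mY ∧ SigmaFinite μ ∧
    ∃ (π : Δ → (Lp ℝ p μ ≃ₗᵢ[ℝ] Lp ℝ p μ)) (b : Δ → Lp ℝ p μ),
      (∃ D : ℝ, ∀ g h : Δ, ‖b (g * h) - b g - (π g) (b h)‖ ≤ D) ∧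
      ∀ C : ℝ, 0 < C → {x ∈ A | ‖b x‖ ≤ C}.Finite

/-- Property (FFFFL^p): every 2-Freiman weak `L^p`-quasi-cocycle (defect bounded over
`Λ`) is bounded on `Λ`. -/
def Freiman2BddOn (p : ℝ≥0∞) (hp : 1 ≤ p) (Γ : Type*) [Group Γ] (Λ : Set Γ) : Prop :=
  haveI : Fact (1 ≤ p) := ⟨hp⟩
  ∀ (Y : Type) [MeasurableSpace Y] [StandardBorelSpace Y] (μ : Measure Y) [SigmaFinite μ]
    (π : Γ → (Lp ℝ p μ ≃ₗᵢ[ℝ] Lp ℝ p μ)) (b : Γ → Lp ℝ p μ),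
    (∃ D : ℝ, ∀ g ∈ Λ, ∀ h ∈ Λ, ‖b (g * h) - b g - (π g) (b h)‖ ≤ D) →
    ∃ C : ℝ, ∀ x ∈ Λ, ‖b x‖ ≤ C

/-- a-FFFFL^p-menability: there is a 2-Freiman weak `L^p`-quasi-cocycle (defect bounded
over `A`) which is proper on `A` in the discrete sense. -/
def Freiman2FinProperOn (p : ℝ≥0∞) (hp : 1 ≤ p) (Δ : Type*) [Group Δ] (A : Set Δ) : Prop :=
  haveI : Fact (1 ≤ p) := ⟨hp⟩
  ∃ (Y : Type) (mY : MeasurableSpace Y) (μ : @Measure Y mY),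
    @StandardBorelSpace Y mY ∧ SigmaFinite μ ∧
    ∃ (π : Δ → (Lp ℝ p μ ≃ₗᵢ[ℝ] Lp ℝ p μ)) (b : Δ → Lp ℝ p μ),
      (∃ D : ℝ, ∀ g ∈ A, ∀ h ∈ A, ‖b (g * h) - b g - (π g) (b h)‖ ≤ D) ∧
      ∀ C : ℝ, 0 < C → {x ∈ A | ‖b x‖ ≤ C}.Finite

section AuxMeyer

open Topology



section PartA

variable (H : Type*) [Group H] [TopologicalSpace H] [IsTopologicalGroup H]

lemma aux_connectedComponentOfOne_normal : (Subgroup.connectedComponentOfOne H).Normal := by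
  constructor
  intro n hn g
  have hc : Continuous fun x : H => g * x * g⁻¹ := by continuity
  have := hc.image_connectedComponent_subset (1 : H)
  have hmem : g * n * g⁻¹ ∈ (fun x : H => g * x * g⁻¹) '' connectedComponent (1 : H) :=
    ⟨n, hn, rfl⟩
  have h1 : (fun x : H => g * x * g⁻¹) 1 = 1 := by simp
  simpa [Subgroup.connectedComponentOfOne, h1] using this hmem

lemma aux_totallyDisconnected_quotient :
    TotallyDisconnectedSpace (H ⧸ Subgroup.connectedComponentOfOne H) := by
  set N := Subgroup.connectedComponentOfOne H with hN
  haveI : N.Normal := aux_connectedComponentOfOne_normal H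
  set Q := H ⧸ N
  set q : H → Q := QuotientGroup.mk with hq
  have hqc : Continuous q := continuous_quot_mk
  have hqo : IsOpenMap q := QuotientGroup.isOpenMap_coe
  have hqsurj : Function.Surjective q := QuotientGroup.mk_surjective
  -- the preimage of the connected component of 1 is preconnected
  set D : Set H := q ⁻¹' (connectedComponent (1 : Q)) with hD
  have hcoset : ∀ d ∈ D, ∃ c : Set H, IsPreconnected c ∧ c ⊆ D ∧ d ∈ c ∧
      ∀ x : H, q x = q d → x ∈ c := by
    intro d hd
    refine ⟨(fun n => d * n) '' connectedComponent (1 : H), ?_, ?_, ?_, ?_⟩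
    · exact isPreconnected_connectedComponent.image _ (continuous_mul_left d).continuousOn
    · rintro _ ⟨n, hn, rfl⟩
      have : q (d * n) = q d := by
        refine (QuotientGroup.eq (s := N)).2 ?_
        simpa using (N.inv_mem (by exact hn) : (n : H)⁻¹ ∈ N)
      show q (d * n) ∈ connectedComponent (1 : Q)
      rw [this]; exact hd
    · exact ⟨1, mem_connectedComponent, by simp⟩
    · intro x hx
      have : d⁻¹ * x ∈ N := (QuotientGroup.eq (s := N)).1 hx.symm
      exact ⟨d⁻¹ * x, this, by group⟩
  have hDpre : IsPreconnected D := by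
    intro u v hu hv hsub ⟨a, haD, hau⟩ ⟨b, hbD, hbv⟩
    have hQpre := isPreconnected_connectedComponent (x := (1 : Q))
    have h1 : connectedComponent (1 : Q) ⊆ q '' u ∪ q '' v := by
      intro y hy
      obtain ⟨x, rfl⟩ := hqsurj y
      rcases hsub hy with h | h
      · exact Or.inl ⟨x, h, rfl⟩
      · exact Or.inr ⟨x, h, rfl⟩
    obtain ⟨y, hyC, ⟨x₁, hx₁u, hx₁⟩, ⟨x₂, hx₂v, hx₂⟩⟩ :=
      hQpre (q '' u) (q '' v) (hqo u hu) (hqo v hv) h1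
        ⟨q a, haD, a, hau, rfl⟩ ⟨q b, hbD, b, hbv, rfl⟩
    have hx₁D : x₁ ∈ D := by rw [hD, mem_preimage, hx₁]; exact hyC
    obtain ⟨c, hcpre, hcD, hx₁c, hclift⟩ := hcoset x₁ hx₁D
    have hx₂c : x₂ ∈ c := hclift x₂ (by rw [hx₂, hx₁])
    obtain ⟨z, hzc, hzuv⟩ :=
      hcpre u v hu hv (hcD.trans hsub) ⟨x₁, hx₁c, hx₁u⟩ ⟨x₂, hx₂c, hx₂v⟩
    exact ⟨z, hcD hzc, hzuv⟩
  have hDN : D ⊆ (N : Set H) := by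
    have h1D : (1 : H) ∈ D := by
      rw [hD, mem_preimage]; exact mem_connectedComponent
    exact hDpre.subset_connectedComponent h1D
  have hkey : connectedComponent (1 : Q) = {1} := by
    apply Subset.antisymm
    · intro y hy
      obtain ⟨x, rfl⟩ := hqsurj y
      have : x ∈ D := hy
      have : x ∈ N := hDN this
      show q x ∈ ({1} : Set Q)
      rw [mem_singleton_iff]
      exact (QuotientGroup.eq_one_iff x).2 this
    · simpa using mem_connectedComponent (x := (1 : Q))
  refine totallyDisconnectedSpace_iff_connectedComponent_singleton.2 fun x => ?_
  apply Subset.antisymm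
  · intro y hy
    have hc : Continuous fun z : Q => x⁻¹ * z := continuous_mul_left _
    have := hc.image_connectedComponent_subset x
    have hmem : x⁻¹ * y ∈ (fun z : Q => x⁻¹ * z) '' connectedComponent x := ⟨y, hy, rfl⟩
    have := this hmem
    rw [inv_mul_cancel, hkey] at this
    have h2 : x⁻¹ * y = 1 := this
    simp only [mem_singleton_iff]
    exact (inv_mul_eq_one.mp h2).symm
  · simpa using mem_connectedComponent (x := x)

end PartA

section VanDantzig

variable {Q : Type*} [Group Q] [TopologicalSpace Q] [IsTopologicalGroup Q]
  [LocallyCompactSpace Q] [T2Space Q] [TotallyDisconnectedSpace Q]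

lemma aux_vanDantzig :
    ∃ U : Subgroup Q, IsOpen (U : Set Q) ∧ IsCompact (U : Set Q) := by
  obtain ⟨K, hKc, hKn⟩ := exists_compact_mem_nhds (1 : Q)
  have hbasis := loc_compact_Haus_tot_disc_of_zero_dim (H := Q)
  have hint : interior K ∈ 𝓝 (1 : Q) := by
    exact interior_mem_nhds.2 hKn
  obtain ⟨W, hWclopen, h1W, hWsub⟩ := hbasis.mem_nhds_iff.1 hint
  have hWcl : IsClopen W := hWclopen
  have hWcompact : IsCompact W :=
    hKc.of_isClosed_subset hWcl.isClosed (hWsub.trans interior_subset)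
  -- find a symmetric open neighborhood V of 1 with W * V ⊆ W
  obtain ⟨T, hTn, hTW⟩ := compact_open_separated_mul_right hWcompact hWcl.isOpen subset_rfl
  obtain ⟨U₀, hU₀T, hU₀open, h1U₀⟩ := mem_nhds_iff.1 hTn
  set V : Set Q := U₀ ∩ U₀⁻¹ with hV
  have hVopen : IsOpen V := hU₀open.inter hU₀open.inv
  have h1V : (1 : Q) ∈ V := ⟨h1U₀, by simpa using h1U₀⟩
  have hVinv : V⁻¹ = V := by
    rw [hV]; simp [Set.inter_inv, Set.inter_comm]
  have hWV : W * V ⊆ W :=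
    (Set.mul_subset_mul_left (Set.inter_subset_left.trans hU₀T)).trans hTW
  let S : Subgroup Q :=
    { carrier := ⋃ n, V ^ (n + 1)
      mul_mem' := fun ha hb => by
        rcases mem_iUnion.mp ha with ⟨k, hk⟩
        rcases mem_iUnion.mp hb with ⟨l, hl⟩
        apply mem_iUnion.mpr
        exact ⟨k + 1 + l, by rw [add_assoc, pow_add]; exact Set.mul_mem_mul hk hl⟩
      one_mem' := mem_iUnion.mpr ⟨0, by simpa using h1V⟩
      inv_mem' := fun ha => by
        rcases mem_iUnion.mp ha with ⟨k, hk⟩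
        apply mem_iUnion.mpr
        refine ⟨k, ?_⟩
        rw [← hVinv]
        simpa only [inv_pow, Set.mem_inv, inv_inv] using hk }
  have hSopen : IsOpen (S : Set Q) := by
    refine isOpen_iUnion fun n => ?_
    rw [pow_succ]
    exact hVopen.mul_left
  have mulVpow : ∀ n : ℕ, W * V ^ (n + 1) ⊆ W := by
    intro n
    induction n with
    | zero => simpa using hWV
    | succ n ih =>
      rw [pow_succ, ← mul_assoc]
      exact (Set.mul_subset_mul_right ih).trans hWV
  have hSW : (S : Set Q) ⊆ W := by
    refine iUnion_subset fun n x hx => ?_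
    exact mulVpow n ⟨1, h1W, x, hx, one_mul x⟩
  exact ⟨S, hSopen, hWcompact.of_isClosed_subset (S.isClosed_of_isOpen hSopen) hSW⟩

end VanDantzig

section A3

variable (H : Type*) [Group H] [TopologicalSpace H] [IsTopologicalGroup H]
  [T2Space H] [LocallyCompactSpace H]

lemma aux_exists_open_almostConnected_subgroup :
    ∃ M : Subgroup H, IsOpen (M : Set H) ∧ ∃ S : Set H, IsCompact S ∧ S ⊆ (M : Set H) ∧
      ∀ m ∈ M, ∃ s ∈ S, s⁻¹ * m ∈ connectedComponent (1 : H) := by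
  set N := Subgroup.connectedComponentOfOne H with hN
  haveI : N.Normal := aux_connectedComponentOfOne_normal H
  haveI : IsClosed (N : Set H) := isClosed_connectedComponent
  haveI : TotallyDisconnectedSpace (H ⧸ N) := aux_totallyDisconnected_quotient H
  set Q := H ⧸ N
  set q : H → Q := QuotientGroup.mk with hq
  have hqc : Continuous q := continuous_quot_mk
  have hqo : IsOpenMap q := QuotientGroup.isOpenMap_coe
  obtain ⟨U, hUopen, hUcompact⟩ := aux_vanDantzig (Q := Q)
  set M : Subgroup H := U.comap (QuotientGroup.mk' N) with hM
  have hMopen : IsOpen (M : Set H) := hUopen.preimage hqc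
  -- construct a compact set S ⊆ M surjecting onto U
  have hcover : ∀ u : Q, ∃ L : Set Q, ∃ Kx : Set H, IsCompact Kx ∧ q '' interior Kx = L
      ∧ IsOpen L ∧ u ∈ L := by
    intro u
    obtain ⟨x, hx⟩ := QuotientGroup.mk_surjective u
    obtain ⟨Kx, hKxc, hKxn⟩ := exists_compact_mem_nhds x
    refine ⟨q '' interior Kx, Kx, hKxc, rfl, hqo _ isOpen_interior, ?_⟩
    exact ⟨x, mem_interior_iff_mem_nhds.2 hKxn, hx⟩
  choose L Kx hKxc hKxim hLopen hLmem using hcover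
  obtain ⟨t, htcover⟩ := hUcompact.elim_finite_subcover L hLopen
    (fun u hu => mem_iUnion.2 ⟨u, hLmem u⟩)
  classical
  set S₀ : Set H := ⋃ u ∈ t, Kx u with hS₀
  have hS₀c : IsCompact S₀ := t.isCompact_biUnion fun u _ => hKxc u
  have hMclosed : IsClosed (M : Set H) := M.isClosed_of_isOpen hMopen
  refine ⟨M, hMopen, S₀ ∩ (M : Set H), hS₀c.inter_right hMclosed, inter_subset_right, ?_⟩
  intro m hm
  have hqmU : q m ∈ (U : Set Q) := hm
  have : q m ∈ ⋃ u ∈ t, L u := htcover hqmU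
  obtain ⟨u, hut, hqm⟩ := mem_iUnion₂.1 this
  rw [← hKxim u] at hqm
  obtain ⟨s, hsK, hsq⟩ := hqm
  have hsM : s ∈ M := by
    show q s ∈ U
    rw [hsq]; exact hqmU
  refine ⟨s, ⟨mem_biUnion hut (interior_subset hsK), hsM⟩, ?_⟩
  exact (QuotientGroup.eq (s := N)).1 hsq

end A3

section A4

variable {H : Type*} [Group H] [TopologicalSpace H] [IsTopologicalGroup H]

lemma aux_compactSpace_connectedComponents (M : Subgroup H) (hMopen : IsOpen (M : Set H))
    (S : Set H) (hSc : IsCompact S) (hSM : S ⊆ (M : Set H))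
    (hS : ∀ m ∈ M, ∃ s ∈ S, s⁻¹ * m ∈ connectedComponent (1 : H)) :
    CompactSpace (ConnectedComponents ↥M) := by
  have hMclosed : IsClosed (M : Set H) := M.isClosed_of_isOpen hMopen
  set S' : Set ↥M := Subtype.val ⁻¹' S with hS'
  have hS'c : IsCompact S' :=
    (hMclosed.isClosedEmbedding_subtypeVal).isCompact_preimage hSc
  have hsurj : ConnectedComponents.mk '' S' = univ := by
    apply eq_univ_of_forall
    intro y
    obtain ⟨m, rfl⟩ := ConnectedComponents.surjective_coe y
    obtain ⟨s, hsS, hsm⟩ := hS (m : H) m.2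
    have hsM : s ∈ M := hSM hsS
    -- the coset s * N is a preconnected subset of M containing both s and m
    set c : Set H := (fun n => s * n) '' connectedComponent (1 : H) with hc
    have hcpre : IsPreconnected c :=
      isPreconnected_connectedComponent.image _ (continuous_mul_left s).continuousOn
    have hcM : c ⊆ (M : Set H) := by
      rintro _ ⟨n, hn, rfl⟩
      have hsm' : s⁻¹ * (m : H) ∈ connectedComponent (1 : H) := hsm
      -- connectedComponent 1 ⊆ M since M is open (hence clopen) and contains 1
      have hNM : connectedComponent (1 : H) ⊆ (M : Set H) :=
        (IsClopen.connectedComponent_subset ⟨hMclosed, hMopen⟩ (M.one_mem))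
      exact M.mul_mem hsM (hNM hn)
    have hsc : s ∈ c := ⟨1, mem_connectedComponent, by simp⟩
    have hmc : (m : H) ∈ c := ⟨s⁻¹ * m, hsm, by group⟩
    -- transfer to the subtype
    have hrange : c ⊆ Set.range (Subtype.val : ↥M → H) := by
      rw [Subtype.range_coe_subtype]; exact hcM
    have himg : Subtype.val '' (Subtype.val ⁻¹' c : Set ↥M) = c :=
      Set.image_preimage_eq_of_subset hrange
    have hpre' : IsPreconnected (Subtype.val ⁻¹' c : Set ↥M) := by
      apply (Topology.IsInducing.subtypeVal.isPreconnected_image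
        (s := (Subtype.val ⁻¹' c : Set ↥M))).1
      convert hcpre using 2
      exact himg
    have : m ∈ connectedComponent (⟨s, hsM⟩ : ↥M) :=
      hpre'.subset_connectedComponent (by exact hsc) (by exact hmc)
    exact ⟨⟨s, hsM⟩, hsS, (ConnectedComponents.coe_eq_coe'.2 this).symm⟩
  constructor
  rw [← hsurj]
  exact hS'c.image ConnectedComponents.continuous_coe

end A4

section Infra

variable {X : Type*} [Group X] [TopologicalSpace X] [IsTopologicalGroup X]

/-- Cover a compact set by finitely many left cosets of an open subgroup, with coset
representatives in a given dense set. -/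
lemma aux_cover_by_cosets (M : Subgroup X) (hMopen : IsOpen (M : Set X)) {P : Set X}
    (hP : Dense P) {C : Set X} (hC : IsCompact C) :
    ∃ t : Finset X, (↑t : Set X) ⊆ P ∧ C ⊆ ⋃ p ∈ t, {y : X | p⁻¹ * y ∈ M} := by
  classical
  have hch : ∀ c : X, ∃ p, p ∈ P ∧ (c ∈ C → c⁻¹ * p ∈ M) := by
    intro c
    by_cases hc : c ∈ C
    · have hopen : IsOpen {y : X | c⁻¹ * y ∈ M} := hMopen.preimage (continuous_mul_left c⁻¹)
      have hne : {y : X | c⁻¹ * y ∈ M}.Nonempty := ⟨c, by simp [M.one_mem]⟩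
      obtain ⟨p, hp1, hp2⟩ := hP.exists_mem_open hopen hne
      exact ⟨p, hp1, fun _ => hp2⟩
    · obtain ⟨p, hp⟩ := hP.nonempty
      exact ⟨p, hp, fun h => absurd h hc⟩
  choose p hpP hpM using hch
  have hUopen : ∀ c : X, IsOpen {y : X | (p c)⁻¹ * y ∈ M} := fun c =>
    hMopen.preimage (continuous_mul_left _)
  have hcov : C ⊆ ⋃ c : X, {y : X | (p c)⁻¹ * y ∈ M} := by
    intro c hc
    refine mem_iUnion.2 ⟨c, ?_⟩
    have : c⁻¹ * p c ∈ M := hpM c hc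
    simpa using M.inv_mem this
  obtain ⟨t, ht⟩ := hC.elim_finite_subcover _ hUopen hcov
  refine ⟨t.image p, ?_, ?_⟩
  · intro q hq
    simp only [Finset.coe_image, mem_image] at hq
    obtain ⟨c, _, rfl⟩ := hq
    exact hpP c
  · intro c hc
    obtain ⟨c', hc't, hc'⟩ := mem_iUnion₂.1 (ht hc)
    exact mem_iUnion₂.2 ⟨p c', Finset.mem_image_of_mem p hc't, hc'⟩

/-- Translate a compact set into an open window using finitely many elements of a dense set. -/
lemma aux_translate_into_window {P : Set X} (hP : Dense P) {C : Set X} (hC : IsCompact C)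
    {Wint : Set X} (hW : IsOpen Wint) (hne : Wint.Nonempty) :
    ∃ t : Finset X, (↑t : Set X) ⊆ P ∧ C ⊆ ⋃ p ∈ t, {b : X | b * p ∈ Wint} := by
  classical
  have hch : ∀ c : X, ∃ q, q ∈ P ∧ (c ∈ C → c * q ∈ Wint) := by
    intro c
    by_cases hc : c ∈ C
    · have hopen : IsOpen {y : X | c * y ∈ Wint} := hW.preimage (continuous_mul_left c)
      have hne' : {y : X | c * y ∈ Wint}.Nonempty := by
        obtain ⟨w, hw⟩ := hne
        exact ⟨c⁻¹ * w, by simp [hw]⟩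
      obtain ⟨q, hq1, hq2⟩ := hP.exists_mem_open hopen hne'
      exact ⟨q, hq1, fun _ => hq2⟩
    · obtain ⟨q, hq⟩ := hP.nonempty
      exact ⟨q, hq, fun h => absurd h hc⟩
  choose q hqP hqW using hch
  have hUopen : ∀ c : X, IsOpen {b : X | b * q c ∈ Wint} := fun c =>
    hW.preimage (continuous_mul_right _)
  have hcov : C ⊆ ⋃ c : X, {b : X | b * q c ∈ Wint} := fun c hc =>
    mem_iUnion.2 ⟨c, hqW c hc⟩
  obtain ⟨t, ht⟩ := hC.elim_finite_subcover _ hUopen hcov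
  refine ⟨t.image q, ?_, ?_⟩
  · intro r hr
    simp only [Finset.coe_image, mem_image] at hr
    obtain ⟨c, _, rfl⟩ := hr
    exact hqP c
  · intro c hc
    obtain ⟨c', hc't, hc'⟩ := mem_iUnion₂.1 (ht hc)
    exact mem_iUnion₂.2 ⟨q c', Finset.mem_image_of_mem q hc't, hc'⟩

/-- A discrete subgroup of a Hausdorff topological group meets every compact set in a
finite set. -/
lemma aux_finite_lattice_inter [T2Space X] (Γ : Subgroup X) (hd : DiscreteTopology ↥Γ)
    {Q : Set X} (hQ : IsCompact Q) : ((Γ : Set X) ∩ Q).Finite := by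
  haveI := hd
  have hclosed : IsClosed (Γ : Set X) := Subgroup.isClosed_of_discrete
  have hcomp : IsCompact ((Γ : Set X) ∩ Q) := hQ.inter_left hclosed
  have hdisc : DiscreteTopology ((Γ : Set X) ∩ Q : Set X) :=
    DiscreteTopology.of_subset (show DiscreteTopology ((Γ : Set X)) from hd) inter_subset_left
  exact hcomp.finite (isDiscrete_iff_discreteTopology.mpr hdisc)

end Infra

end AuxMeyer

/-- Every uniform model set `Λ = Λ(G,H,Γ,W)` is contained in `F·Σ` for a
model set `Σ` of almost connected type and a finite set `F ⊆ π_G(Γ)` each of whose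
elements quasi-commensurates `Σ`. -/
theorem modelSet_subset_enlarged_almostConnected_modelSet
    (G : Type) [Group G] [TopologicalSpace G] [IsTopologicalGroup G] [T2Space G]
    [LocallyCompactSpace G] [SecondCountableTopology G]
    (H : Type) [Group H] [TopologicalSpace H] [IsTopologicalGroup H] [T2Space H]
    [LocallyCompactSpace H] [SecondCountableTopology H]
    (Γ : Subgroup (G × H)) (hCP : IsCutAndProject Γ)
    (W : Set H) (hWc : IsCompact W) (hWint : (interior W).Nonempty) :
    ∃ (M : LCSCGroupPack), CompactSpace (ConnectedComponents M.carrier) ∧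
      ∃ (ΓM : Subgroup (G × M.carrier)), IsCutAndProject ΓM ∧
        ∃ (WM : Set M.carrier), IsCompact WM ∧ (interior WM).Nonempty ∧
          ∃ (F : Set G), F.Finite ∧ F ⊆ Prod.fst '' (Γ : Set (G × H)) ∧
            modelSet Γ W ⊆ F * modelSet ΓM WM ∧
            ∀ x ∈ F, ∃ Fx : Set G, Fx.Finite ∧ Fx ⊆ Prod.fst '' (Γ : Set (G × H)) ∧
              {x} * modelSet ΓM WM ⊆ modelSet ΓM WM * Fx ∧
              modelSet ΓM WM * {x} ⊆ Fx * modelSet ΓM WM := by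
    classical
  haveI hΓdisc : DiscreteTopology ↥Γ := hCP.lattice.1
  obtain ⟨K, hKc, hKuniv⟩ := hCP.lattice.2
  obtain ⟨M, hMopen, S, hSc, hSM, hSprop⟩ := aux_exists_open_almostConnected_subgroup H
  have hMclosed : IsClosed (M : Set H) := M.isClosed_of_isOpen hMopen
  letI : LocallyCompactSpace ↥M := hMopen.locallyCompactSpace
  haveI : SecondCountableTopology ↥M := by
    exact TopologicalSpace.secondCountableTopology_induced ↥M H Subtype.val
  letI : MeasurableSpace ↥M := borel ↥M
  haveI : BorelSpace ↥M := ⟨rfl⟩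
  haveI hCC : CompactSpace (ConnectedComponents ↥M) :=
    aux_compactSpace_connectedComponents M hMopen S hSc hSM hSprop
  -- the embedding of `G × ↥M` into `G × H`
  set φ : G × ↥M →* G × H := (MonoidHom.id G).prodMap M.subtype with hφdef
  have hφcoe : ∀ z : G × ↥M, φ z = (z.1, (z.2 : H)) := fun z => rfl
  have hφinj : Function.Injective (⇑φ) := by
    intro a b hab
    rw [hφcoe a, hφcoe b] at hab
    obtain ⟨h1, h2⟩ := Prod.mk.inj hab
    exact Prod.ext h1 (Subtype.ext h2)
  have hφemb : Topology.IsEmbedding (⇑φ) := by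
    have h : (⇑φ) = Prod.map id (Subtype.val : ↥M → H) := rfl
    rw [h]
    exact Topology.IsEmbedding.id.prodMap Topology.IsEmbedding.subtypeVal
  have hφrange : Set.range (⇑φ) = univ ×ˢ (M : Set H) := by
    ext z
    constructor
    · rintro ⟨w, rfl⟩
      exact ⟨trivial, w.2.2⟩
    · rintro ⟨-, hz⟩
      exact ⟨(z.1, ⟨z.2, hz⟩), rfl⟩
  set ΓM : Subgroup (G × ↥M) := Γ.comap φ with hΓMdef
  -- discreteness of ΓM
  haveI hΓMdisc : DiscreteTopology ↥ΓM := by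
    have hembcomp : Topology.IsEmbedding ((⇑φ) ∘ (Subtype.val : ↥ΓM → G × ↥M)) :=
      hφemb.comp Topology.IsEmbedding.subtypeVal
    have hf : Topology.IsEmbedding (fun x : ↥ΓM => (⟨φ ↑x, x.2⟩ : ↥Γ)) :=
      Topology.IsEmbedding.of_comp
        (Continuous.subtype_mk (hφemb.continuous.comp continuous_subtype_val) _)
        continuous_subtype_val hembcomp
    exact hf.discreteTopology
  -- density of the projection of ΓM to ↥M
  have hΓMdense : Dense (Prod.snd '' (ΓM : Set (G × ↥M))) := by
    rw [dense_iff_inter_open]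
    intro U hU hUne
    have hUopen : IsOpen (Subtype.val '' U : Set H) :=
      (hMopen.isOpenEmbedding_subtypeVal).isOpenMap U hU
    have hUne' : (Subtype.val '' U : Set H).Nonempty := hUne.image _
    obtain ⟨h0, hh0P, hh0U⟩ := hCP.dense_proj.exists_mem_open hUopen hUne'
    obtain ⟨u, huU, huh0⟩ := hh0U
    obtain ⟨ξ, hξΓ, hξ2⟩ := hh0P
    refine ⟨u, huU, (ξ.1, u), ?_, rfl⟩
    show φ (ξ.1, u) ∈ Γ
    have : φ (ξ.1, u) = ξ := by
      rw [hφcoe]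
      exact Prod.ext rfl (by rw [huh0, hξ2])
    rwa [this]
  -- relative denseness of ΓM in G × ↥M
  have hπHK : IsCompact (Prod.snd '' K) := hKc.image continuous_snd
  obtain ⟨t, htP, htcov⟩ := aux_cover_by_cosets M hMopen hCP.dense_proj hπHK
  have hδex : ∀ p ∈ t, ∃ δ : G × H, δ ∈ Γ ∧ δ.2 = p := by
    intro p hp
    obtain ⟨δ, hδΓ, hδp⟩ := htP hp
    exact ⟨δ, hδΓ, hδp⟩
  choose! δ hδΓ hδsnd using hδex
  set K₀ : Set (G × H) :=
    (⋃ p ∈ t, (fun z => (δ p)⁻¹ * z) '' K) ∩ (univ ×ˢ (M : Set H)) with hK₀def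
  have hK₀c : IsCompact K₀ := by
    apply IsCompact.inter_right _ (isClosed_univ.prod hMclosed)
    exact t.isCompact_biUnion fun p _ => hKc.image (continuous_mul_left _)
  set K' : Set (G × ↥M) := (⇑φ) ⁻¹' K₀ with hK'def
  have hK'c : IsCompact K' :=
    hφemb.isInducing.isCompact_preimage' hK₀c (by rw [hφrange]; exact inter_subset_right)
  have hK'univ : (ΓM : Set (G × ↥M)) * K' = univ := by
    apply eq_univ_of_forall
    intro x
    have hx : φ x ∈ (Γ : Set (G × H)) * K := by rw [hKuniv]; trivial
    obtain ⟨γ, hγ, k, hk, hgk⟩ := Set.mem_mul.1 hx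
    have hk2 : k.2 ∈ Prod.snd '' K := ⟨k, hk, rfl⟩
    obtain ⟨p, hpt, hpk⟩ := mem_iUnion₂.1 (htcov hk2)
    have hgk' : (γ * δ p) * ((δ p)⁻¹ * k) = φ x := by
      rw [mul_assoc, mul_inv_cancel_left]; exact hgk
    have hk'2 : ((δ p)⁻¹ * k).2 ∈ M := by
      have h : ((δ p)⁻¹ * k).2 = (δ p).2⁻¹ * k.2 := rfl
      rw [h, hδsnd p hpt]
      exact hpk
    have hγ'Γ : γ * δ p ∈ Γ := Γ.mul_mem hγ (hδΓ p hpt)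
    have hγ'2 : (γ * δ p).2 ∈ M := by
      have h2 : (γ * δ p).2 * ((δ p)⁻¹ * k).2 = ((x.2 : ↥M) : H) := by
        have := congrArg Prod.snd hgk'
        exact this
      have h3 : (γ * δ p).2 = ((x.2 : ↥M) : H) * (((δ p)⁻¹ * k).2)⁻¹ := by
        rw [← h2]; group
      rw [h3]
      exact M.mul_mem x.2.2 (M.inv_mem hk'2)
    refine Set.mem_mul.2
      ⟨((γ * δ p).1, ⟨(γ * δ p).2, hγ'2⟩), ?_, (((δ p)⁻¹ * k).1, ⟨((δ p)⁻¹ * k).2, hk'2⟩), ?_, ?_⟩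
    · show φ _ ∈ Γ
      rw [hφcoe]
      exact hγ'Γ
    · show φ _ ∈ K₀
      rw [hφcoe]
      refine ⟨mem_biUnion hpt ⟨k, hk, rfl⟩, trivial, hk'2⟩
    · apply hφinj
      rw [map_mul]
      show φ _ * φ _ = φ x
      rw [hφcoe, hφcoe]
      exact hgk'
  have hrel : RelativelyDense (ΓM : Set (G × ↥M)) := ⟨K', hK'c, hK'univ⟩
  -- ΓM is a cut-and-project scheme
  have hΓMcp : IsCutAndProject ΓM := by
    refine ⟨⟨hΓMdisc, hrel⟩, ?_, hΓMdense⟩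
    intro x y hxy
    have hx' : φ ↑x ∈ Γ := x.2
    have hy' : φ ↑y ∈ Γ := y.2
    have h1 : (⟨φ ↑x, hx'⟩ : ↥Γ) = ⟨φ ↑y, hy'⟩ := hCP.inj _ _ hxy
    have h2 : φ ↑x = φ ↑y := congrArg Subtype.val h1
    exact Subtype.ext (hφinj h2)
  -- construction of the window WM
  obtain ⟨t₁, ht₁P, ht₁cov⟩ := aux_cover_by_cosets M hMopen hCP.dense_proj hWc
  have hδ1ex : ∀ p ∈ t₁, ∃ ξ : G × H, ξ ∈ Γ ∧ ξ.2 = p := by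
    intro p hp
    obtain ⟨ξ, hξΓ, hξp⟩ := ht₁P hp
    exact ⟨ξ, hξΓ, hξp⟩
  choose! γel hγelΓ hγelsnd using hδ1ex
  set B₁ : Set H := ⋃ p ∈ t₁, ((fun y => p⁻¹ * y) '' W ∩ (M : Set H)) with hB₁def
  have hB₁c : IsCompact B₁ :=
    t₁.isCompact_biUnion fun p _ => (hWc.image (continuous_mul_left _)).inter_right hMclosed
  have hB₁M : B₁ ⊆ (M : Set H) := by
    intro b hb
    obtain ⟨p, hp, hmem⟩ := mem_iUnion₂.1 hb
    exact hmem.2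
  obtain ⟨V₀, hV₀c, hV₀n⟩ := exists_compact_mem_nhds (1 : ↥M)
  have hpreB₁c : IsCompact (Subtype.val ⁻¹' B₁ : Set ↥M) :=
    Topology.IsInducing.subtypeVal.isCompact_preimage'
      hB₁c (by rw [Subtype.range_coe_subtype]; exact hB₁M)
  set WM₀ : Set ↥M := (Subtype.val ⁻¹' B₁) ∪ V₀ with hWM₀def
  set WM : Set ↥M := WM₀ ∪ WM₀⁻¹ with hWMdef
  have hWM₀c : IsCompact WM₀ := hpreB₁c.union hV₀c
  have hWMc : IsCompact WM := hWM₀c.union hWM₀c.inv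
  have hWMsymm : WM⁻¹ = WM := by
    rw [hWMdef, Set.union_inv, inv_inv, union_comm]
  have hWMint : (interior WM).Nonempty := by
    refine ⟨1, ?_⟩
    apply interior_mono (show V₀ ⊆ WM from subset_union_right.trans subset_union_left)
    exact mem_interior_iff_mem_nhds.2 hV₀n
  -- the finite set F
  set F : Set G := (fun p => (γel p).1) '' (t₁ : Set H) with hFdef
  have hFfin : F.Finite := t₁.finite_toSet.image _
  have hFsub : F ⊆ Prod.fst '' (Γ : Set (G × H)) := by
    rintro _ ⟨p, hp, rfl⟩
    exact ⟨γel p, hγelΓ p hp, rfl⟩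
  -- the covering Λ(Γ, W) ⊆ F * Λ(ΓM, WM)
  have hcover : modelSet Γ W ⊆ F * modelSet ΓM WM := by
    rintro _ ⟨ξ, ⟨hξΓ, -, hξW⟩, rfl⟩
    obtain ⟨p, hpt, hpmem⟩ := mem_iUnion₂.1 (ht₁cov hξW)
    have hηΓ : (γel p)⁻¹ * ξ ∈ Γ := Γ.mul_mem (Γ.inv_mem (hγelΓ p hpt)) hξΓ
    have hη2M : ((γel p)⁻¹ * ξ).2 ∈ M := by
      have h : ((γel p)⁻¹ * ξ).2 = (γel p).2⁻¹ * ξ.2 := rfl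
      rw [h, hγelsnd p hpt]
      exact hpmem
    have hη2B : ((γel p)⁻¹ * ξ).2 ∈ B₁ := by
      refine mem_biUnion hpt ⟨⟨ξ.2, hξW, ?_⟩, hη2M⟩
      have h2 : ((γel p)⁻¹ * ξ).2 = (γel p).2⁻¹ * ξ.2 := rfl
      rw [h2, hγelsnd p hpt]
    refine Set.mem_mul.2 ⟨(γel p).1, ⟨p, hpt, rfl⟩, ((γel p)⁻¹ * ξ).1, ?_, ?_⟩
    · refine ⟨(((γel p)⁻¹ * ξ).1, ⟨((γel p)⁻¹ * ξ).2, hη2M⟩), ⟨?_, trivial, ?_⟩, rfl⟩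
      · show φ _ ∈ Γ
        rw [hφcoe]
        exact hηΓ
      · show (⟨((γel p)⁻¹ * ξ).2, hη2M⟩ : ↥M) ∈ WM
        exact Or.inl (Or.inl hη2B)
    · show (γel p).1 * ((γel p)⁻¹ * ξ).1 = ξ.1
      have h : ((γel p)⁻¹ * ξ).1 = (γel p).1⁻¹ * ξ.1 := rfl
      rw [h, mul_inv_cancel_left]
  -- symmetry of the model set Σ := Λ(ΓM, WM)
  have hSgmem : ∀ σ ∈ modelSet ΓM WM, σ⁻¹ ∈ modelSet ΓM WM := by
    rintro _ ⟨ζ, ⟨hζΓ, -, hζW⟩, rfl⟩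
    refine ⟨ζ⁻¹, ⟨ΓM.inv_mem hζΓ, trivial, ?_⟩, rfl⟩
    show (ζ⁻¹).2 ∈ WM
    have h : (ζ⁻¹).2 = (ζ.2)⁻¹ := rfl
    rw [h, ← hWMsymm]
    exact Set.inv_mem_inv.2 hζW
  -- relative denseness of Σ in G
  have hCc : IsCompact ((Prod.snd '' K')⁻¹ : Set ↥M) := (hK'c.image continuous_snd).inv
  obtain ⟨t₂, ht₂P, ht₂cov⟩ :=
    aux_translate_into_window hΓMdense hCc isOpen_interior hWMint
  have hδ2ex : ∀ p ∈ t₂, ∃ ζ : G × ↥M, ζ ∈ ΓM ∧ ζ.2 = p := by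
    intro p hp
    obtain ⟨ζ, hζΓ, hζp⟩ := ht₂P hp
    exact ⟨ζ, hζΓ, hζp⟩
  choose! δ₂ hδ₂Γ hδ₂snd using hδ2ex
  set D : Set G := ⋃ p ∈ t₂, (fun z => ((δ₂ p).1)⁻¹ * z) '' (Prod.fst '' K') with hDdef
  have hDc : IsCompact D :=
    t₂.isCompact_biUnion fun p _ => (hK'c.image continuous_fst).image (continuous_mul_left _)
  have hright : ∀ g : G, ∃ σ ∈ modelSet ΓM WM, σ⁻¹ * g ∈ D := by
    intro g
    have hx : (g, (1 : ↥M)) ∈ (ΓM : Set (G × ↥M)) * K' := by rw [hK'univ]; trivial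
    obtain ⟨ζ, hζ, k, hk, hζk⟩ := Set.mem_mul.1 hx
    have hζ2 : ζ.2 ∈ (Prod.snd '' K')⁻¹ := by
      have h2 : ζ.2 * k.2 = 1 := congrArg Prod.snd hζk
      have h3 : ζ.2 = (k.2)⁻¹ := eq_inv_of_mul_eq_one_left h2
      rw [h3]
      exact Set.inv_mem_inv.2 ⟨k, hk, rfl⟩
    obtain ⟨p, hpt, hpw⟩ := mem_iUnion₂.1 (ht₂cov hζ2)
    have hσΓ : ζ * δ₂ p ∈ ΓM := ΓM.mul_mem hζ (hδ₂Γ p hpt)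
    have hσW : (ζ * δ₂ p).2 ∈ WM := by
      have h : (ζ * δ₂ p).2 = ζ.2 * (δ₂ p).2 := rfl
      rw [h, hδ₂snd p hpt]
      exact interior_subset hpw
    refine ⟨(ζ * δ₂ p).1, ⟨ζ * δ₂ p, ⟨hσΓ, trivial, hσW⟩, rfl⟩, ?_⟩
    have hg1 : ζ.1 * k.1 = g := congrArg Prod.fst hζk
    have h4 : ((ζ * δ₂ p).1)⁻¹ * g = ((δ₂ p).1)⁻¹ * k.1 := by
      have h1 : (ζ * δ₂ p).1 = ζ.1 * (δ₂ p).1 := rfl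
      rw [h1, ← hg1]
      group
    rw [h4]
    exact mem_biUnion hpt ⟨k.1, ⟨k, hk, rfl⟩, rfl⟩
  have hleft : ∀ g : G, ∃ σ ∈ modelSet ΓM WM, g * σ ∈ D⁻¹ := by
    intro g
    obtain ⟨σ, hσ, hd⟩ := hright g⁻¹
    refine ⟨σ, hσ, ?_⟩
    have h : g * σ = (σ⁻¹ * g⁻¹)⁻¹ := by group
    rw [h]
    exact Set.inv_mem_inv.2 hd
  -- the compact image window in H
  set WM' : Set H := Subtype.val '' WM with hWM'def
  have hWM'c : IsCompact WM' := hWMc.image continuous_subtype_val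
  -- assemble the result
  refine ⟨{ carrier := ↥M }, hCC, ΓM, hΓMcp, WM, hWMc, hWMint, F, hFfin, hFsub, hcover, ?_⟩
  -- quasi-commensuration
  rintro x hxF
  obtain ⟨p₀, hp₀t, rfl⟩ := hxF
  set Cright : Set H := WM'⁻¹ * ({(γel p₀).2} * WM') with hCrightdef
  set Cleft : Set H := WM' * ({(γel p₀).2} * WM') with hCleftdef
  have hCrightc : IsCompact Cright :=
    hWM'c.inv.mul (isCompact_singleton.mul hWM'c)
  have hCleftc : IsCompact Cleft :=
    hWM'c.mul (isCompact_singleton.mul hWM'c)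
  set Fx : Set G :=
    Prod.fst '' ((Γ : Set (G × H)) ∩ (D ×ˢ Cright)) ∪
      Prod.fst '' ((Γ : Set (G × H)) ∩ (D⁻¹ ×ˢ Cleft)) with hFxdef
  have hFxfin : Fx.Finite := by
    apply Set.Finite.union
    · exact (aux_finite_lattice_inter Γ hΓdisc (hDc.prod hCrightc)).image _
    · exact (aux_finite_lattice_inter Γ hΓdisc (hDc.inv.prod hCleftc)).image _
  have hFxsub : Fx ⊆ Prod.fst '' (Γ : Set (G × H)) := by
    rintro _ (⟨ξ, ⟨hξΓ, -⟩, rfl⟩ | ⟨ξ, ⟨hξΓ, -⟩, rfl⟩) <;> exact ⟨ξ, hξΓ, rfl⟩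
  refine ⟨Fx, hFxfin, hFxsub, ?_, ?_⟩
  · -- x * Σ ⊆ Σ * Fx
    rintro _ ⟨a, ha, b, hb, rfl⟩
    rw [mem_singleton_iff] at ha
    subst ha
    obtain ⟨ζ, ⟨hζΓ, -, hζW⟩, rfl⟩ := hb
    obtain ⟨τ, hτSg, hτD⟩ := hright ((γel p₀).1 * ζ.1)
    obtain ⟨ζ', ⟨hζ'Γ, -, hζ'W⟩, rfl⟩ := hτSg
    refine Set.mem_mul.2 ⟨ζ'.1, ⟨ζ', ⟨hζ'Γ, trivial, hζ'W⟩, rfl⟩,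
      (ζ'.1)⁻¹ * ((γel p₀).1 * ζ.1), ?_, by rw [mul_inv_cancel_left]⟩
    refine Or.inl ⟨(φ ζ')⁻¹ * (γel p₀ * φ ζ), ⟨?_, ?_, ?_⟩, rfl⟩
    · exact Γ.mul_mem (Γ.inv_mem hζ'Γ) (Γ.mul_mem (hγelΓ p₀ hp₀t) hζΓ)
    · exact hτD
    · show ((φ ζ')⁻¹ * (γel p₀ * φ ζ)).2 ∈ Cright
      have h : ((φ ζ')⁻¹ * (γel p₀ * φ ζ)).2 =
          ((ζ'.2 : H))⁻¹ * ((γel p₀).2 * (ζ.2 : H)) := rfl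
      rw [h]
      exact Set.mul_mem_mul (Set.inv_mem_inv.2 ⟨ζ'.2, hζ'W, rfl⟩)
        (Set.mul_mem_mul rfl ⟨ζ.2, hζW, rfl⟩)
  · -- Σ * x ⊆ Fx * Σ
    rintro _ ⟨b, hb, a, ha, rfl⟩
    rw [mem_singleton_iff] at ha
    subst ha
    obtain ⟨ζ, ⟨hζΓ, -, hζW⟩, rfl⟩ := hb
    obtain ⟨σ, hσSg, hσD⟩ := hleft (ζ.1 * (γel p₀).1)
    obtain ⟨ζ', ⟨hζ'Γ, -, hζ'W⟩, rfl⟩ := hσSg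
    have hσinv : (ζ'.1)⁻¹ ∈ modelSet ΓM WM :=
      hSgmem _ ⟨ζ', ⟨hζ'Γ, trivial, hζ'W⟩, rfl⟩
    refine Set.mem_mul.2 ⟨ζ.1 * (γel p₀).1 * ζ'.1, ?_, (ζ'.1)⁻¹, hσinv,
      by rw [mul_inv_cancel_right]⟩
    refine Or.inr ⟨φ ζ * (γel p₀ * φ ζ'), ⟨?_, ?_, ?_⟩, ?_⟩
    · exact Γ.mul_mem hζΓ (Γ.mul_mem (hγelΓ p₀ hp₀t) hζ'Γ)
    · show (φ ζ * (γel p₀ * φ ζ')).1 ∈ D⁻¹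
      have h : (φ ζ * (γel p₀ * φ ζ')).1 = ζ.1 * ((γel p₀).1 * ζ'.1) := rfl
      rw [h, ← mul_assoc]
      exact hσD
    · show (φ ζ * (γel p₀ * φ ζ')).2 ∈ Cleft
      have h : (φ ζ * (γel p₀ * φ ζ')).2 =
          (ζ.2 : H) * ((γel p₀).2 * (ζ'.2 : H)) := rfl
      rw [h]
      exact Set.mul_mem_mul ⟨ζ.2, hζW, rfl⟩ (Set.mul_mem_mul rfl ⟨ζ'.2, hζ'W, rfl⟩)
    · show (φ ζ * (γel p₀ * φ ζ')).1 = ζ.1 * (γel p₀).1 * ζ'.1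
      have h : (φ ζ * (γel p₀ * φ ζ')).1 = ζ.1 * ((γel p₀).1 * ζ'.1) := rfl
      rw [h, mul_assoc]
end

section
/- Let 1 < p < ∞, let (Λ, Λ^∞) and (Σ, Σ^∞) be approximate groups, and let φ : Λ^∞ → Σ^∞ be a quasimorphism with φ(Λ) ⊆ Σ, i.e. the set {φ(h)⁻¹φ(g)⁻¹φ(gh) : g, h ∈ Λ^∞} is finite. Assume: (a) every weak L^p-quasi-cocycle (π, b) on Λ^∞ has b bounded on Λ (Property (FFFL^p) of (Λ, Λ^∞)); and (b) there exists a weak L^p-quasi-cocycle (π', b') on Σ^∞ such that for every C > 0 the set {g ∈ Σ : ‖b'(g)‖ ≤ C} is finite (a-FFFL^p-menability of (Σ, Σ^∞)). Then φ(Λ) is finite. -/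
open MeasureTheory Set
open scoped Pointwise ENNReal

/-- If the approximate group `(Λ, Λ^∞)` has Property (FFFL^p), the
approximate group `(S, S^∞)` is a-FFFL^p-menable, and `φ : Λ^∞ → S^∞` is a quasimorphism
with `φ(Λ) ⊆ S`, then `φ(Λ)` is finite. -/
theorem FFFLp_rigidity_of_quasimorphism
    (p : ℝ≥0∞) (hp1 : 1 < p) (hp2 : p < ⊤)
    (Γ : Type) [Group Γ] (Λ : Set Γ) (hΛsym : Λ⁻¹ = Λ) (hΛ1 : (1 : Γ) ∈ Λ)
    (hΛap : ∃ F : Set Γ, F.Finite ∧ Λ * Λ ⊆ Λ * F) (hΛgen : Subgroup.closure Λ = ⊤)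
    (Δ : Type) [Group Δ] (S : Set Δ) (hSsym : S⁻¹ = S) (hS1 : (1 : Δ) ∈ S)
    (hSap : ∃ F : Set Δ, F.Finite ∧ S * S ⊆ S * F) (hSgen : Subgroup.closure S = ⊤)
    (φ : Γ → Δ)
    (hqm : {d : Δ | ∃ g h : Γ, d = (φ h)⁻¹ * (φ g)⁻¹ * φ (g * h)}.Finite)
    (hφ : φ '' Λ ⊆ S)
    (hT : WqBddOn p hp1.le Γ Λ)
    (hM : ExistsWqCocycleFinProperOn p hp1.le Δ S) :
    (φ '' Λ).Finite := by
  haveI : Fact (1 ≤ p) := ⟨hp1.le⟩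
  obtain ⟨Y, mY, μ, hSB, hSF, π', b', ⟨D, hD⟩, hprop⟩ := hM
  haveI := hSB
  haveI := hSF
  -- bound the cocycle on the finite defect set
  obtain ⟨M, hMb⟩ : ∃ M : ℝ,
      ∀ d ∈ {d : Δ | ∃ g h : Γ, d = (φ h)⁻¹ * (φ g)⁻¹ * φ (g * h)}, ‖b' d‖ ≤ M := by
    obtain ⟨M, hM'⟩ := (hqm.image (fun d => ‖b' d‖)).bddAbove
    exact ⟨M, fun d hd => hM' (Set.mem_image_of_mem _ hd)⟩
  have key : ∃ C : ℝ, ∀ x ∈ Λ, ‖b' (φ x)‖ ≤ C := by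
    apply hT Y μ (fun g => π' (φ g)) (fun g => b' (φ g))
    refine ⟨D + D + M, fun g h => ?_⟩
    set d : Δ := (φ h)⁻¹ * (φ g)⁻¹ * φ (g * h) with hdd
    have hφgh : φ (g * h) = φ g * φ h * d := by rw [hdd]; group
    have h1 : ‖b' (φ g * φ h * d) - b' (φ g * φ h) - (π' (φ g * φ h)) (b' d)‖ ≤ D :=
      hD (φ g * φ h) d
    have h2 : ‖b' (φ g * φ h) - b' (φ g) - (π' (φ g)) (b' (φ h))‖ ≤ D := hD (φ g) (φ h)
    have h3 : ‖(π' (φ g * φ h)) (b' d)‖ ≤ M := by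
      rw [LinearIsometryEquiv.norm_map]; exact hMb d ⟨g, h, rfl⟩
    calc ‖b' (φ (g * h)) - b' (φ g) - (π' (φ g)) (b' (φ h))‖
        = ‖(b' (φ g * φ h * d) - b' (φ g * φ h) - (π' (φ g * φ h)) (b' d))
            + (b' (φ g * φ h) - b' (φ g) - (π' (φ g)) (b' (φ h)))
            + (π' (φ g * φ h)) (b' d)‖ := by rw [hφgh]; congr 1; abel
      _ ≤ ‖b' (φ g * φ h * d) - b' (φ g * φ h) - (π' (φ g * φ h)) (b' d)‖
            + ‖b' (φ g * φ h) - b' (φ g) - (π' (φ g)) (b' (φ h))‖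
            + ‖(π' (φ g * φ h)) (b' d)‖ := norm_add₃_le
      _ ≤ D + D + M := by gcongr
  obtain ⟨C, hC⟩ := key
  have hfin : {x ∈ S | ‖b' x‖ ≤ max C 1}.Finite :=
    hprop _ (lt_max_of_lt_right one_pos)
  refine hfin.subset ?_
  rintro _ ⟨x, hx, rfl⟩
  exact ⟨hφ ⟨x, hx, rfl⟩, le_trans (hC x hx) (le_max_left _ _)⟩
end

section
/- Let 1 < p < ∞, let Γ₂ be a countable group, let Γ₁ ≤ Γ₂ be a subgroup of finite index, let A₂ ⊆ Γ₂ and A₁ ⊆ Γ₁ ∩ A₂. If every L^p-cocycle (π, b) on Γ₂ has b bounded on A₂, then every L^p-cocycle (π, b) on Γ₁ has b bounded on A₁. -/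
open MeasureTheory Set
open scoped Pointwise ENNReal

section LpProdAux

variable {Y : Type} [MeasurableSpace Y] {Q : Type} [Fintype Q] [MeasurableSpace Q]
  [MeasurableSingletonClass Q] (μ : Measure Y) [SigmaFinite μ]

lemma count_prod_eq_sum :
    (Measure.count : Measure Q).prod μ = Measure.sum (fun q : Q => μ.map (Prod.mk q)) := by
  rw [show (Measure.count : Measure Q) = Measure.sum Measure.dirac from rfl,
    Measure.prod_sum_left]
  exact congrArg Measure.sum (funext fun q => Measure.dirac_prod q)

lemma lintegral_count_prod (f : Q × Y → ℝ≥0∞) (hf : Measurable f) :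
    ∫⁻ z, f z ∂((Measure.count : Measure Q).prod μ) = ∑ q : Q, ∫⁻ y, f (q, y) ∂μ := by
  rw [count_prod_eq_sum μ, lintegral_sum_measure, tsum_fintype]
  exact Finset.sum_congr rfl fun q _ => lintegral_map hf measurable_prodMk_left

lemma ae_count_prod {α : Type*} {g₁ g₂ : Q × Y → α}
    (h : ∀ q : Q, (fun y => g₁ (q, y)) =ᵐ[μ] fun y => g₂ (q, y)) :
    g₁ =ᵐ[(Measure.count : Measure Q).prod μ] g₂ := by
  rw [Filter.EventuallyEq, ae_iff]
  have hsub : {z : Q × Y | ¬ g₁ z = g₂ z}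
      ⊆ ⋃ q : Q, {q} ×ˢ {y : Y | ¬ g₁ (q, y) = g₂ (q, y)} := by
    rintro ⟨q, y⟩ hz
    exact Set.mem_iUnion.2 ⟨q, rfl, hz⟩
  refine measure_mono_null hsub (measure_iUnion_null fun q => ?_)
  obtain ⟨T, hsubT, hTm, hT0⟩ := exists_measurable_superset_of_null (ae_iff.1 (h q))
  refine measure_mono_null (Set.prod_mono subset_rfl hsubT) ?_
  rw [Measure.prod_prod, hT0, mul_zero]

lemma stronglyMeasurable_of_slices {f : Q × Y → ℝ}
    (h : ∀ q : Q, StronglyMeasurable fun y => f (q, y)) : StronglyMeasurable f := by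
  have h1 : Measurable fun z : Y × Q => f (z.2, z.1) :=
    measurable_from_prod_countable_left fun q => (h q).measurable
  have h2 : Measurable f := h1.comp measurable_swap
  exact h2.stronglyMeasurable

variable (p : ℝ≥0∞)

lemma eLpNorm_rpow_eq {α : Type*} [MeasurableSpace α] (ν : Measure α) (g : α → ℝ)
    (hp0 : p ≠ 0) (hpt : p ≠ ⊤) :
    eLpNorm g p ν ^ p.toReal = ∫⁻ x, (‖g x‖₊ : ℝ≥0∞) ^ p.toReal ∂ν := by
  have hpr : p.toReal ≠ 0 := (ENNReal.toReal_pos hp0 hpt).ne'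
  rw [eLpNorm_eq_lintegral_rpow_enorm_toReal hp0 hpt, one_div, ← ENNReal.rpow_mul,
    inv_mul_cancel₀ hpr, ENNReal.rpow_one]
  rfl

lemma eLpNorm_count_prod {G : Q × Y → ℝ} (hG : StronglyMeasurable G)
    (hp0 : p ≠ 0) (hpt : p ≠ ⊤) :
    eLpNorm G p ((Measure.count : Measure Q).prod μ) ^ p.toReal
      = ∑ q : Q, eLpNorm (fun y => G (q, y)) p μ ^ p.toReal := by
  rw [eLpNorm_rpow_eq p ((Measure.count : Measure Q).prod μ) G hp0 hpt,
    lintegral_count_prod μ (fun z => (‖G z‖₊ : ℝ≥0∞) ^ p.toReal) (hG.measurable.enorm.pow_const _)]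
  exact Finset.sum_congr rfl fun q _ => (eLpNorm_rpow_eq p μ _ hp0 hpt).symm

variable [Fact (1 ≤ p)]

lemma memℒp_T (hpt : p ≠ ⊤) (f : PiLp p (fun _ : Q => Lp ℝ p μ)) :
    MemLp (fun z : Q × Y => (f z.1 : Y → ℝ) z.2) p ((Measure.count : Measure Q).prod μ) := by
  have hp0 : p ≠ 0 := (zero_lt_one.trans_le (Fact.out : (1:ℝ≥0∞) ≤ p)).ne'
  have hpr : 0 < p.toReal := ENNReal.toReal_pos hp0 hpt
  have hsm : StronglyMeasurable fun z : Q × Y => (f z.1 : Y → ℝ) z.2 :=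
    stronglyMeasurable_of_slices fun q => Lp.stronglyMeasurable (f q)
  refine ⟨hsm.aestronglyMeasurable, ?_⟩
  refine (ENNReal.rpow_lt_top_iff_of_pos hpr).1 ?_
  rw [eLpNorm_count_prod μ p hsm hp0 hpt]
  exact ENNReal.sum_lt_top.2 fun q _ =>
    ENNReal.rpow_lt_top_of_nonneg hpr.le (Lp.eLpNorm_ne_top (f q))

lemma norm_T (hpt : p ≠ ⊤) (f : PiLp p (fun _ : Q => Lp ℝ p μ)) :
    ‖(memℒp_T μ p hpt f).toLp _‖ = ‖f‖ := by
  have hp0 : p ≠ 0 := (zero_lt_one.trans_le (Fact.out : (1:ℝ≥0∞) ≤ p)).ne'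
  have hpr : 0 < p.toReal := ENNReal.toReal_pos hp0 hpt
  have hsm : StronglyMeasurable fun z : Q × Y => (f z.1 : Y → ℝ) z.2 :=
    stronglyMeasurable_of_slices fun q => Lp.stronglyMeasurable (f q)
  have hS : eLpNorm (fun z : Q × Y => (f z.1 : Y → ℝ) z.2) p
        ((Measure.count : Measure Q).prod μ) ^ p.toReal
      = ∑ q : Q, eLpNorm (⇑(f q)) p μ ^ p.toReal :=
    eLpNorm_count_prod μ p hsm hp0 hpt
  have h1 : eLpNorm (fun z : Q × Y => (f z.1 : Y → ℝ) z.2) p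
        ((Measure.count : Measure Q).prod μ)
      = (∑ q : Q, eLpNorm (⇑(f q)) p μ ^ p.toReal) ^ (p.toReal)⁻¹ := by
    rw [← hS, ← ENNReal.rpow_mul, mul_inv_cancel₀ hpr.ne', ENNReal.rpow_one]
  rw [Lp.norm_toLp _ (memℒp_T μ p hpt f), h1, PiLp.norm_eq_sum hpr, one_div, ← ENNReal.toReal_rpow]
  congr 1
  rw [ENNReal.toReal_sum
    (fun q _ => (ENNReal.rpow_lt_top_of_nonneg hpr.le (Lp.eLpNorm_ne_top (f q))).ne)]
  exact Finset.sum_congr rfl fun q _ => by rw [← ENNReal.toReal_rpow, ← Lp.norm_def]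

noncomputable def lpProdLI (hpt : p ≠ ⊤) :
    PiLp p (fun _ : Q => Lp ℝ p μ) →ₗᵢ[ℝ] Lp ℝ p ((Measure.count : Measure Q).prod μ) where
  toFun f := (memℒp_T μ p hpt f).toLp _
  map_add' f g := by
    have hae : (fun z : Q × Y => ((f + g) z.1 : Y → ℝ) z.2)
        =ᵐ[(Measure.count : Measure Q).prod μ]
        (fun z : Q × Y => (f z.1 : Y → ℝ) z.2) + (fun z : Q × Y => (g z.1 : Y → ℝ) z.2) := by
      refine ae_count_prod μ fun q => ?_
      filter_upwards [Lp.coeFn_add (f q) (g q)] with y hy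
      show ((f + g) q : Y → ℝ) y = (f q : Y → ℝ) y + (g q : Y → ℝ) y
      rw [PiLp.add_apply]
      exact hy
    exact (MemLp.toLp_congr (memℒp_T μ p hpt (f + g))
      ((memℒp_T μ p hpt f).add (memℒp_T μ p hpt g)) hae).trans (MemLp.toLp_add _ _)
  map_smul' c f := by
    have hae : (fun z : Q × Y => ((c • f) z.1 : Y → ℝ) z.2)
        =ᵐ[(Measure.count : Measure Q).prod μ]
        c • (fun z : Q × Y => (f z.1 : Y → ℝ) z.2) := by
      refine ae_count_prod μ fun q => ?_
      filter_upwards [Lp.coeFn_smul c (f q)] with y hy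
      show ((c • f) q : Y → ℝ) y = c • (f q : Y → ℝ) y
      rw [PiLp.smul_apply]
      exact hy
    simp only [RingHom.id_apply]
    exact (MemLp.toLp_congr (memℒp_T μ p hpt (c • f))
      ((memℒp_T μ p hpt f).const_smul c) hae).trans (MemLp.toLp_const_smul c _)
  norm_map' f := norm_T μ p hpt f

lemma lpProdLI_surjective (hpt : p ≠ ⊤) : Function.Surjective (lpProdLI (Q := Q) μ p hpt) := by
  intro F
  have hp0 : p ≠ 0 := (zero_lt_one.trans_le (Fact.out : (1:ℝ≥0∞) ≤ p)).ne'
  have hpr : 0 < p.toReal := ENNReal.toReal_pos hp0 hpt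
  have hsm := Lp.stronglyMeasurable F
  have hslice : ∀ q : Q, MemLp (fun y => (F : Q × Y → ℝ) (q, y)) p μ := by
    intro q
    refine ⟨(hsm.comp_measurable measurable_prodMk_left).aestronglyMeasurable, ?_⟩
    refine (ENNReal.rpow_lt_top_iff_of_pos hpr).1 ?_
    calc eLpNorm (fun y => (F : Q × Y → ℝ) (q, y)) p μ ^ p.toReal
        ≤ ∑ q' : Q, eLpNorm (fun y => (F : Q × Y → ℝ) (q', y)) p μ ^ p.toReal :=
          Finset.single_le_sum
            (f := fun q' : Q => eLpNorm (fun y => (F : Q × Y → ℝ) (q', y)) p μ ^ p.toReal)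
            (fun _ _ => zero_le) (Finset.mem_univ q)
      _ = eLpNorm (⇑F) p ((Measure.count : Measure Q).prod μ) ^ p.toReal :=
          (eLpNorm_count_prod μ p hsm hp0 hpt).symm
      _ < ⊤ := ENNReal.rpow_lt_top_of_nonneg hpr.le (Lp.eLpNorm_ne_top F)
  let g : PiLp p (fun _ : Q => Lp ℝ p μ) := WithLp.toLp p fun q => (hslice q).toLp _
  refine ⟨g, ?_⟩
  have hae : (fun z : Q × Y => (g z.1 : Y → ℝ) z.2)
      =ᵐ[(Measure.count : Measure Q).prod μ] ⇑F :=
    ae_count_prod μ fun q => (hslice q).coeFn_toLp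
  exact (MemLp.toLp_congr (memℒp_T μ p hpt g) (Lp.memLp F) hae).trans
    (Lp.toLp_coeFn F (Lp.memLp F))

noncomputable def lpProdEquiv (hpt : p ≠ ⊤) :
    PiLp p (fun _ : Q => Lp ℝ p μ) ≃ₗᵢ[ℝ] Lp ℝ p ((Measure.count : Measure Q).prod μ) :=
  LinearIsometryEquiv.ofSurjective _ (lpProdLI_surjective (Q := Q) μ p hpt)

end LpProdAux

lemma piLp_norm_coord_le {ι : Type*} [Fintype ι] {E : Type*} [NormedAddCommGroup E]
    (p : ℝ≥0∞) (hpr : 0 < p.toReal) (f : PiLp p fun _ : ι => E) (i : ι) : ‖f i‖ ≤ ‖f‖ := by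
  rw [PiLp.norm_eq_sum hpr]
  have h1 : ‖f i‖ ^ p.toReal ≤ ∑ j, ‖f j‖ ^ p.toReal :=
    Finset.single_le_sum (fun j _ => Real.rpow_nonneg (norm_nonneg _) _) (Finset.mem_univ i)
  calc ‖f i‖ = (‖f i‖ ^ p.toReal) ^ (1 / p.toReal) := by
        rw [one_div, ← Real.rpow_mul (norm_nonneg _), mul_inv_cancel₀ hpr.ne', Real.rpow_one]
    _ ≤ (∑ j, ‖f j‖ ^ p.toReal) ^ (1 / p.toReal) :=
        Real.rpow_le_rpow (Real.rpow_nonneg (norm_nonneg _) _) h1 (by positivity)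

/-- Relative Property (FL^p) passes to finite-index subgroups:
if every `L^p`-cocycle on `Γ₂` is bounded on `A₂` and `Γ₁ ≤ Γ₂` has finite index,
then every `L^p`-cocycle on `Γ₁` is bounded on `A₁ ⊆ Γ₁ ∩ A₂`. -/
theorem relative_FLp_of_finiteIndex
    (p : ℝ≥0∞) (hp1 : 1 < p) (hp2 : p < ⊤)
    (Γ₂ : Type) [Group Γ₂] [Countable Γ₂] (Γ₁ : Subgroup Γ₂) (hfi : Γ₁.FiniteIndex)
    (A₂ A₁ : Set Γ₂) (hA₁ : A₁ ⊆ ↑Γ₁ ∩ A₂)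
    (h : BddLpCocyclesOn p hp1.le Γ₂ A₂) :
    BddLpCocyclesOn p hp1.le ↥Γ₁ {x : ↥Γ₁ | (x : Γ₂) ∈ A₁} := by
  haveI : Fact (1 ≤ p) := ⟨hp1.le⟩
  have hp0 : p ≠ 0 := (zero_lt_one.trans hp1).ne'
  have hpt : p ≠ ⊤ := hp2.ne
  have hpr : 0 < p.toReal := ENNReal.toReal_pos hp0 hpt
  intro Y mY sB μ sf π b hb
  classical
  haveI := hfi
  haveI : Finite (Γ₂ ⧸ Γ₁) := Γ₁.finite_quotient_of_finiteIndex
  letI : Fintype (Γ₂ ⧸ Γ₁) := Fintype.ofFinite _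
  letI : MeasurableSpace (Γ₂ ⧸ Γ₁) := ⊤
  haveI : DiscreteMeasurableSpace (Γ₂ ⧸ Γ₁) := ⟨fun _ => MeasurableSpace.measurableSet_top⟩
  -- group-theoretic data
  let q₀ : Γ₂ ⧸ Γ₁ := QuotientGroup.mk 1
  let σ : Γ₂ ⧸ Γ₁ → Γ₂ := fun q => if q = q₀ then 1 else Quotient.out q
  have hσ : ∀ q : Γ₂ ⧸ Γ₁, QuotientGroup.mk (σ q) = q := by
    intro q
    by_cases hq : q = q₀
    · show QuotientGroup.mk (if q = q₀ then 1 else Quotient.out q) = q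
      rw [if_pos hq, hq]
    · show QuotientGroup.mk (if q = q₀ then 1 else Quotient.out q) = q
      rw [if_neg hq]
      exact QuotientGroup.out_eq' q
  have hmem : ∀ (g : Γ₂) (q : Γ₂ ⧸ Γ₁), (σ (g • q))⁻¹ * (g * σ q) ∈ Γ₁ := by
    intro g q
    have hq : (QuotientGroup.mk (σ (g • q)) : Γ₂ ⧸ Γ₁) = QuotientGroup.mk (g * σ q) := by
      rw [hσ (g • q)]
      conv_lhs => rw [← hσ q]
      rfl
    exact QuotientGroup.eq.mp hq
  let c : Γ₂ → Γ₂ ⧸ Γ₁ → Γ₁ := fun g q => ⟨(σ (g • q))⁻¹ * (g * σ q), hmem g q⟩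
  have hc_mul : ∀ (g₁ g₂ : Γ₂) (q : Γ₂ ⧸ Γ₁), c (g₁ * g₂) q = c g₁ (g₂ • q) * c g₂ q := by
    intro g₁ g₂ q
    apply Subtype.ext
    show (σ ((g₁ * g₂) • q))⁻¹ * (g₁ * g₂ * σ q)
        = ((σ (g₁ • (g₂ • q)))⁻¹ * (g₁ * σ (g₂ • q))) * ((σ (g₂ • q))⁻¹ * (g₂ * σ q))
    rw [mul_smul]
    group
  have hσq₀ : σ q₀ = 1 := if_pos rfl
  have hq₀fix : ∀ γ : Γ₁, (γ : Γ₂) • q₀ = q₀ := by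
    intro γ
    show QuotientGroup.mk ((γ : Γ₂) * 1) = (QuotientGroup.mk 1 : Γ₂ ⧸ Γ₁)
    refine QuotientGroup.eq.mpr ?_
    simpa using Γ₁.inv_mem γ.2
  have hq₀inv : ∀ γ : Γ₁, ((γ : Γ₂))⁻¹ • q₀ = q₀ := by
    intro γ
    have := hq₀fix γ⁻¹
    simpa using this
  have hc_diag : ∀ γ : Γ₁, c (γ : Γ₂) q₀ = γ := by
    intro γ
    apply Subtype.ext
    show (σ ((γ : Γ₂) • q₀))⁻¹ * ((γ : Γ₂) * σ q₀) = γ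
    rw [hq₀fix γ, hσq₀]
    group
  -- the induced representation and cocycle
  set ν : Measure ((Γ₂ ⧸ Γ₁) × Y) := (Measure.count : Measure (Γ₂ ⧸ Γ₁)).prod μ with hν
  let F := PiLp p (fun _ : Γ₂ ⧸ Γ₁ => Lp ℝ p μ)
  let e : F ≃ₗᵢ[ℝ] Lp ℝ p ν := lpProdEquiv (Q := Γ₂ ⧸ Γ₁) μ p hpt
  let P2 : Γ₂ → (F ≃ₗᵢ[ℝ] F) := fun g =>
    (LinearIsometryEquiv.piLpCongrRight p (fun q => π (c g q))).trans
      (LinearIsometryEquiv.piLpCongrLeft p ℝ (Lp ℝ p μ) (MulAction.toPerm g))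
  have hP2_apply : ∀ (g : Γ₂) (f : F) (q : Γ₂ ⧸ Γ₁),
      P2 g f q = π (c g (g⁻¹ • q)) (f (g⁻¹ • q)) := fun g f q => rfl
  have hP2_mul : ∀ (g₁ g₂ : Γ₂) (f : F), P2 (g₁ * g₂) f = P2 g₁ (P2 g₂ f) := by
    intro g₁ g₂ f
    ext q
    rw [hP2_apply, hP2_apply, hP2_apply]
    have hs : (g₁ * g₂)⁻¹ • q = g₂⁻¹ • (g₁⁻¹ • q) := by rw [mul_inv_rev, mul_smul]
    rw [hs, hc_mul g₁ g₂ (g₂⁻¹ • (g₁⁻¹ • q)), smul_inv_smul, map_mul]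
    rfl
  let π₂ : Γ₂ →* (Lp ℝ p ν ≃ₗᵢ[ℝ] Lp ℝ p ν) :=
    MonoidHom.mk' (fun g => (e.symm.trans (P2 g)).trans e) (by
      intro g₁ g₂
      apply LinearIsometryEquiv.ext
      intro v
      show e (P2 (g₁ * g₂) (e.symm v)) = e (P2 g₁ (e.symm (e (P2 g₂ (e.symm v)))))
      rw [e.symm_apply_apply, hP2_mul])
  let B : Γ₂ → F := fun g => WithLp.toLp p (fun q => b (c g (g⁻¹ • q)) : ∀ _ : Γ₂ ⧸ Γ₁, Lp ℝ p μ)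
  let b₂ : Γ₂ → Lp ℝ p ν := fun g => e (B g)
  have hcoc : ∀ g₁ g₂ : Γ₂, b₂ (g₁ * g₂) = b₂ g₁ + π₂ g₁ (b₂ g₂) := by
    intro g₁ g₂
    have key : B (g₁ * g₂) = B g₁ + P2 g₁ (B g₂) := by
      ext1 q
      rw [PiLp.add_apply, hP2_apply]
      show b (c (g₁ * g₂) ((g₁ * g₂)⁻¹ • q))
          = b (c g₁ (g₁⁻¹ • q)) + π (c g₁ (g₁⁻¹ • q)) (B g₂ (g₁⁻¹ • q))
      have hs : (g₁ * g₂)⁻¹ • q = g₂⁻¹ • (g₁⁻¹ • q) := by rw [mul_inv_rev, mul_smul]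
      rw [hs, hc_mul g₁ g₂ (g₂⁻¹ • (g₁⁻¹ • q)), smul_inv_smul, hb]
    show e (B (g₁ * g₂)) = e (B g₁) + e (P2 g₁ (e.symm (e (B g₂))))
    rw [e.symm_apply_apply, key, map_add]
  obtain ⟨C, hC⟩ := h ((Γ₂ ⧸ Γ₁) × Y) ν π₂ b₂ hcoc
  refine ⟨C, ?_⟩
  intro x hx
  have hxA₂ : (x : Γ₂) ∈ A₂ := (hA₁ hx).2
  have hbx : b x = B (x : Γ₂) q₀ := by
    show b x = b (c (↑x) ((↑x : Γ₂)⁻¹ • q₀))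
    rw [hq₀inv x, hc_diag x]
  calc ‖b x‖ = ‖B (x : Γ₂) q₀‖ := by rw [hbx]
    _ ≤ ‖B (x : Γ₂)‖ := piLp_norm_coord_le p hpr _ q₀
    _ = ‖b₂ (x : Γ₂)‖ := (e.norm_map _).symm
    _ ≤ C := hC _ hxA₂
end

section
/- Let 1 < p < ∞, let G be an lcsc group, and let Λ ⊆ G be a relatively dense approximate subgroup of G, with Λ^∞ the subgroup of G generated by Λ. If every L^p-cocycle (π, b) on the abstract group Λ^∞ has b bounded on Λ, then every continuous L^p-cocycle on G is bounded, i.e. G has Property (FL^p). -/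
open MeasureTheory Set
open scoped Pointwise ENNReal

/-- If `Λ` is a relatively dense approximate subgroup of an lcsc group
`G` and every `L^p`-cocycle on the abstract group `Λ^∞` is bounded on `Λ`, then `G` has
Property (FL^p). -/
theorem FLp_of_relativelyDense_approximate_subgroup
    (p : ℝ≥0∞) (hp1 : 1 < p) (hp2 : p < ⊤)
    (G : Type) [Group G] [TopologicalSpace G] [IsTopologicalGroup G] [T2Space G]
    [LocallyCompactSpace G] [SecondCountableTopology G]
    (Λ : Set G) (hΛsym : Λ⁻¹ = Λ) (hΛ1 : (1 : G) ∈ Λ)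
    (hΛap : ∃ F : Set G, F.Finite ∧ Λ * Λ ⊆ Λ * F)
    (hΛrd : RelativelyDense Λ)
    (h : BddLpCocyclesOn p hp1.le ↥(Subgroup.closure Λ)
      {x : ↥(Subgroup.closure Λ) | (x : G) ∈ Λ}) :
    HasFLp p hp1.le G := by
  haveI : Fact (1 ≤ p) := ⟨hp1.le⟩
  intro Y _ _ μ _ π b hcoc hbcont _
  -- restrict the cocycle to the subgroup generated by Λ
  set Δ := Subgroup.closure Λ
  have hrestr : ∀ g h' : ↥Δ, b ((g * h' : ↥Δ) : G)
      = b (g : G) + (π.comp Δ.subtype g) (b (h' : G)) := by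
    intro g h'
    simpa using hcoc (g : G) (h' : G)
  obtain ⟨C₁, hC₁⟩ := h Y μ (π.comp Δ.subtype) (fun x => b (x : G)) hrestr
  -- compact set K with Λ * K = univ
  obtain ⟨K, hKc, hKcov⟩ := hΛrd
  -- b is bounded on K
  have hbK : ∃ C₂ : ℝ, ∀ k ∈ K, ‖b k‖ ≤ C₂ := by
    have himg : IsCompact (b '' K) := hKc.image hbcont
    obtain ⟨C₂, hC₂⟩ := himg.isBounded.exists_norm_le
    exact ⟨C₂, fun k hk => hC₂ _ (Set.mem_image_of_mem b hk)⟩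
  obtain ⟨C₂, hC₂⟩ := hbK
  refine ⟨C₁ + C₂, fun g => ?_⟩
  have hg : g ∈ Λ * K := by rw [hKcov]; trivial
  obtain ⟨x, hx, k, hk, rfl⟩ := hg
  have hxΔ : x ∈ Δ := Subgroup.subset_closure hx
  have hbx : ‖b x‖ ≤ C₁ := hC₁ ⟨x, hxΔ⟩ hx
  calc ‖b (x * k)‖ = ‖b x + (π x) (b k)‖ := by rw [hcoc]
    _ ≤ ‖b x‖ + ‖(π x) (b k)‖ := norm_add_le _ _
    _ = ‖b x‖ + ‖b k‖ := by rw [(π x).norm_map]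
    _ ≤ C₁ + C₂ := add_le_add hbx (hC₂ k hk)
end

section
/- Let (G, H, Γ) be a uniform cut-and-project scheme and W ⊆ H a compact set. Let Y = (G × H)/Γ with the (G × H)-invariant Borel probability measure m_Y, and let s = (s_G, s_H) : Y → G × H be a Borel section of the quotient map (s(x)Γ = x for all x) with precompact image. For γ = (γ₁, γ₂) ∈ Γ and x, y ∈ Y put g^γ_{x,y} := s_G(x) · γ₁ · s_G(y)⁻¹ ∈ G. Then for every conull Borel set Ω ⊆ G × Y and every nonnegative φ ∈ L¹(Y, m_Y) there exists a constant C > 0 such that for every γ = (γ₁, γ₂) ∈ Γ with γ₂ ∈ W there exist x, y ∈ Y with (g^γ_{x,y}, x) ∈ Ω, φ(x) ≤ C, and φ((g^γ_{x,y}, 1_H)⁻¹·x) ≤ C. -/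
open MeasureTheory Set
open scoped Pointwise ENNReal

/-- A Fubini/Čebyšev selection lemma for uniform cut-and-project schemes:
given a conull `Ω ⊆ G × Y` and a nonnegative `φ ∈ L¹(Y, m_Y)`, there is `C > 0` such that
for every `γ ∈ Γ` with `π_H(γ) ∈ W` one can find `x, y ∈ Y` with
`(g^γ_{x,y}, x) ∈ Ω`, `φ(x) ≤ C` and `φ((g^γ_{x,y}, 1)⁻¹·x) ≤ C`. -/
theorem fubini_chebyshev_selection
    (G : Type) [Group G] [TopologicalSpace G] [IsTopologicalGroup G] [T2Space G]
    [LocallyCompactSpace G] [SecondCountableTopology G] [MeasurableSpace G] [BorelSpace G]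
    (H : Type) [Group H] [TopologicalSpace H] [IsTopologicalGroup H] [T2Space H]
    [LocallyCompactSpace H] [SecondCountableTopology H] [MeasurableSpace H] [BorelSpace H]
    (Γ : Subgroup (G × H)) (hCP : IsCutAndProject Γ) (W : Set H) (hW : IsCompact W)
    (mY : Measure ((G × H) ⧸ Γ)) (hprob : IsProbabilityMeasure mY)
    (hinv : SMulInvariantMeasure (G × H) ((G × H) ⧸ Γ) mY)
    (s : (G × H) ⧸ Γ → G × H) (hs : ∀ x, (QuotientGroup.mk (s x) : (G × H) ⧸ Γ) = x)
    (hsm : Measurable s) (hsb : IsCompact (closure (Set.range s)))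
    (μG : Measure G) (hHaar : μG.IsHaarMeasure)
    (Ω : Set (G × ((G × H) ⧸ Γ))) (hΩm : MeasurableSet Ω) (hΩ : (μG.prod mY) Ωᶜ = 0)
    (φ : (G × H) ⧸ Γ → ℝ) (hφ : Integrable φ mY) (hφ0 : ∀ x, 0 ≤ φ x) :
    ∃ C : ℝ, 0 < C ∧ ∀ γ : ↥Γ, (γ : G × H).2 ∈ W → ∃ x y : (G × H) ⧸ Γ,
      ((s x).1 * (γ : G × H).1 * ((s y).1)⁻¹, x) ∈ Ω ∧ φ x ≤ C ∧
      φ ((((s x).1 * (γ : G × H).1 * ((s y).1)⁻¹, (1 : H)) : G × H)⁻¹ • x) ≤ C := by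
  classical
  haveI := hprob
  haveI hGH : μG.IsHaarMeasure := hHaar
  set μH : Measure H := Measure.haar with hμHdef
  haveI hΓd : DiscreteTopology ↥Γ := hCP.lattice.1
  haveI hΓcnt : Countable ↥Γ := by
    rw [← TopologicalSpace.separableSpace_iff_countable]
    infer_instance
  -- finiteness of Γ ∩ compact
  have finTr : ∀ C : Set (G × H), IsCompact C → {γ' : ↥Γ | (γ' : G × H) ∈ C}.Finite := by
    intro C hC
    have h1 : IsClosed ((Γ : Set (G × H))) := Subgroup.isClosed_of_discrete
    have h2 : IsCompact ((Γ : Set (G × H)) ∩ C) := hC.inter_left h1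
    have hd : DiscreteTopology ↥((Γ : Set (G × H)) ∩ C) :=
      DiscreteTopology.of_subset (show DiscreteTopology ↥(Γ : Set (G × H)) from hΓd)
        inter_subset_left
    have h3 : ((Γ : Set (G × H)) ∩ C).Finite := h2.finite (isDiscrete_iff_discreteTopology.mpr hd)
    have h4 : (Subtype.val ⁻¹' ((Γ : Set (G × H)) ∩ C) : Set ↥Γ).Finite :=
      h3.preimage Subtype.val_injective.injOn
    refine h4.subset fun γ' hγ' => ⟨γ'.2, hγ'⟩
  set K : Set (G × H) := closure (Set.range s) with hKdef
  have hKc : IsCompact K := hsb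
  have hsK : ∀ x, s x ∈ K := fun x => subset_closure (mem_range_self x)
  set K₁ : Set G := Prod.fst '' K with hK1def
  set K₂ : Set H := Prod.snd '' K with hK2def
  have hK1c : IsCompact K₁ := hKc.image continuous_fst
  have hK2c : IsCompact K₂ := hKc.image continuous_snd
  have hmk_meas : Measurable (QuotientGroup.mk : G × H → (G × H) ⧸ Γ) :=
    QuotientGroup.measurable_coe
  have hmeas_mulγ : ∀ γ' : ↥Γ, Measurable fun x : (G × H) ⧸ Γ => s x * (γ' : G × H) :=
    fun γ' => hsm.mul_const _
  -- the unfolded measure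
  set lam : Measure (G × H) :=
    Measure.sum (fun γ' : ↥Γ => Measure.map (fun x => s x * (γ' : G × H)) mY) with hlamdef
  have hlam_apply : ∀ {A : Set (G × H)}, MeasurableSet A →
      lam A = ∑' γ' : ↥Γ, mY ((fun x => s x * (γ' : G × H)) ⁻¹' A) := by
    intro A hA
    rw [hlamdef, Measure.sum_apply _ hA]
    exact tsum_congr fun γ' => Measure.map_apply (hmeas_mulγ γ') hA
  -- multiplicity bound
  have hunfold : ∀ D : Set (G × H), IsCompact D → ∃ n : ℕ, ∀ Z : Set ((G × H) ⧸ Γ),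
      MeasurableSet Z → lam ((QuotientGroup.mk ⁻¹' Z) ∩ D) ≤ (n : ℝ≥0∞) * mY Z := by
    intro D hD
    have hFin : {γ' : ↥Γ | (γ' : G × H) ∈ K⁻¹ * D}.Finite := finTr _ (hKc.inv.mul hD)
    refine ⟨hFin.toFinset.card, fun Z hZ => ?_⟩
    have hDm : MeasurableSet D := hD.isClosed.measurableSet
    rw [hlam_apply ((hmk_meas hZ).inter hDm)]
    have key : ∀ γ' : ↥Γ, (fun x => s x * (γ' : G × H)) ⁻¹' ((QuotientGroup.mk ⁻¹' Z) ∩ D)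
        = {x | x ∈ Z ∧ s x * (γ' : G × H) ∈ D} := by
      intro γ'
      ext x
      simp only [Set.mem_preimage, Set.mem_inter_iff, Set.mem_setOf_eq]
      rw [QuotientGroup.mk_mul_of_mem (s x) γ'.2, hs x]
    rw [tsum_eq_sum (s := hFin.toFinset) ?_]
    · refine le_trans (Finset.sum_le_card_nsmul _ _ (mY Z) fun γ' _ => ?_) ?_
      · refine measure_mono fun x hx => ?_
        rw [key γ'] at hx
        exact hx.1
      · rw [nsmul_eq_mul]
    · intro γ' hγ'
      rw [key γ']
      convert measure_empty (μ := mY)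
      rw [Set.eq_empty_iff_forall_notMem]
      rintro x ⟨-, hxD⟩
      refine (hFin.mem_toFinset.not.mp hγ') ?_
      have : ((s x)⁻¹ * (s x * (γ' : G × H))) ∈ K⁻¹ * D :=
        mul_mem_mul (inv_mem_inv.mpr (hsK x)) hxD
      simpa [inv_mul_cancel_left] using this
  haveI hlamfc : IsFiniteMeasureOnCompacts lam := by
    constructor
    intro D hD
    obtain ⟨n, hn⟩ := hunfold D hD
    have h1 := hn Set.univ MeasurableSet.univ
    simp only [Set.preimage_univ, Set.univ_inter, measure_univ, mul_one] at h1
    exact lt_of_le_of_lt h1 (ENNReal.natCast_lt_top n)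
  -- left invariance of lam
  haveI hlaminv : lam.IsMulLeftInvariant := by
    constructor
    intro g
    refine Measure.ext fun A hA => ?_
    have hiA : MeasurableSet ((fun z => g * z) ⁻¹' A) := measurable_const_mul g hA
    rw [Measure.map_apply (measurable_const_mul g) hA]
    have hTint : ∀ m : (G × H) ⧸ Γ → G × H, Measurable m →
        ∫⁻ x, ∑' γ' : ↥Γ, A.indicator (fun _ => (1 : ℝ≥0∞)) (m x * (γ' : G × H)) ∂mY
          = ∑' γ' : ↥Γ, mY ((fun x => m x * (γ' : G × H)) ⁻¹' A) := by
      intro m hm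
      have hma : ∀ γ' : ↥Γ,
          AEMeasurable (fun x => A.indicator (fun _ => (1 : ℝ≥0∞)) (m x * (γ' : G × H))) mY :=
        fun γ' => ((measurable_const.indicator hA).comp (hm.mul_const _)).aemeasurable
      rw [lintegral_tsum hma]
      exact tsum_congr fun γ' => by
        rw [lintegral_indicator_const_comp (hm.mul_const _) hA, one_mul]
    have hL : lam ((fun z => g * z) ⁻¹' A)
        = ∫⁻ x, ∑' γ' : ↥Γ, A.indicator (fun _ => (1 : ℝ≥0∞)) ((g * s x) * (γ' : G × H)) ∂mY := by
      rw [hlam_apply hiA, hTint (fun x => g * s x) (hsm.const_mul g)]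
      refine tsum_congr fun γ' => ?_
      congr 1
      ext x
      simp [Set.mem_preimage, mul_assoc]
    have hR : lam A
        = ∫⁻ x, ∑' γ' : ↥Γ, A.indicator (fun _ => (1 : ℝ≥0∞)) (s x * (γ' : G × H)) ∂mY := by
      rw [hlam_apply hA, hTint s hsm]
    rw [hL, hR]
    have hgmeas : Measurable (fun x : (G × H) ⧸ Γ => g • x) := by
      have h2 : (fun z : G × H => g • (QuotientGroup.mk z : (G × H) ⧸ Γ))
          = fun z : G × H => (QuotientGroup.mk (g * z) : (G × H) ⧸ Γ) := by
        funext z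
        rw [MulAction.Quotient.smul_mk, smul_eq_mul]
      refine QuotientGroup.measurable_from_quotient.mpr ?_
      show Measurable fun z : G × H => g • (QuotientGroup.mk z : (G × H) ⧸ Γ)
      rw [h2]
      exact hmk_meas.comp (measurable_const_mul g)
    have hgmp : MeasurePreserving (fun x : (G × H) ⧸ Γ => g • x) mY mY := by
      refine ⟨hgmeas, Measure.ext fun B hB => ?_⟩
      rw [Measure.map_apply hgmeas hB]
      exact hinv.measure_preimage_smul g hB
    have hpt : ∀ x, ∑' γ' : ↥Γ, A.indicator (fun _ => (1 : ℝ≥0∞)) ((g * s x) * (γ' : G × H))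
        = ∑' γ' : ↥Γ, A.indicator (fun _ => (1 : ℝ≥0∞)) (s (g • x) * (γ' : G × H)) := by
      intro x
      have hmkeq : (QuotientGroup.mk (g * s x) : (G × H) ⧸ Γ) = QuotientGroup.mk (s (g • x)) := by
        rw [hs (g • x)]
        calc (QuotientGroup.mk (g * s x) : (G × H) ⧸ Γ)
            = g • (QuotientGroup.mk (s x)) := by rw [MulAction.Quotient.smul_mk, smul_eq_mul]
          _ = g • x := by rw [hs x]
      have hδ : ((s (g • x))⁻¹ * (g * s x)) ∈ Γ := QuotientGroup.eq.mp hmkeq.symm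
      have hfac : g * s x = s (g • x) * (((⟨_, hδ⟩ : ↥Γ) : G × H)) := by
        simp [mul_inv_cancel_left]
      rw [hfac]
      calc ∑' γ' : ↥Γ, A.indicator (fun _ => (1 : ℝ≥0∞)) ((s (g • x) * ((⟨_, hδ⟩ : ↥Γ) : G × H)) * (γ' : G × H))
          = ∑' γ' : ↥Γ, A.indicator (fun _ => (1 : ℝ≥0∞))
              (s (g • x) * (((Equiv.mulLeft (⟨_, hδ⟩ : ↥Γ)) γ' : ↥Γ) : G × H)) := by
            refine tsum_congr fun γ' => ?_
            congr 1
            simp [Equiv.coe_mulLeft, mul_assoc]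
        _ = ∑' γ' : ↥Γ, A.indicator (fun _ => (1 : ℝ≥0∞)) (s (g • x) * (γ' : G × H)) :=
            Equiv.tsum_eq (Equiv.mulLeft (⟨_, hδ⟩ : ↥Γ))
              (fun b : ↥Γ => A.indicator (fun _ => (1 : ℝ≥0∞)) (s (g • x) * (b : G × H)))
    rw [lintegral_congr hpt]
    have hF : Measurable fun z : (G × H) ⧸ Γ =>
        ∑' γ' : ↥Γ, A.indicator (fun _ => (1 : ℝ≥0∞)) (s z * (γ' : G × H)) :=
      Measurable.ennreal_tsum fun γ' => (measurable_const.indicator hA).comp (hsm.mul_const _)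
    exact hgmp.lintegral_comp hF
  -- lam is a multiple of Haar measure on G × H
  set prodH : Measure (G × H) := μG.prod μH with hprodHdef
  haveI hprodHaar : prodH.IsHaarMeasure := by
    rw [hprodHdef]; infer_instance
  have hlam_eq := Measure.isMulLeftInvariant_eq_smul lam prodH
  set c : ℝ≥0∞ := (lam.haarScalarFactor prodH : ℝ≥0∞) with hcdef
  have hlamA : ∀ A : Set (G × H), lam A = c * prodH A := by
    intro A
    rw [hlam_eq]
    rfl
  have hc_ne_top : c ≠ ∞ := ENNReal.coe_ne_top
  have hKm : MeasurableSet K := hKc.isClosed.measurableSet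
  have hν_le : ∀ B : Set (G × H), MeasurableSet B → mY (s ⁻¹' B) ≤ c * prodH B := by
    intro B hB
    have h2 : mY (s ⁻¹' B) = (Measure.map (fun x => s x * ((1 : ↥Γ) : G × H)) mY) B := by
      rw [Measure.map_apply (hmeas_mulγ 1) hB]
      congr 1
      ext x
      simp
    rw [h2, ← hlamA B]
    exact Measure.le_iff.mp (Measure.le_sum _ 1) B hB
  have hc_ne_zero : c ≠ 0 := by
    intro h0
    have h1 : (1 : ℝ≥0∞) ≤ lam K := by
      refine le_trans ?_ (Measure.le_iff.mp (Measure.le_sum _ 1) K hKm)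
      rw [Measure.map_apply (hmeas_mulγ 1) hKm]
      have : (fun x => s x * ((1 : ↥Γ) : G × H)) ⁻¹' K = Set.univ := by
        ext x
        simp [hsK x]
      rw [this, measure_univ]
    rw [hlamA K, h0, zero_mul] at h1
    simpa using h1
  -- marginals
  set ρG : Measure G := Measure.map (fun x => (s x).1) mY with hρGdef
  set ρH : Measure H := Measure.map (fun x => (s x).2) mY with hρHdef
  have hsGm : Measurable fun x : (G × H) ⧸ Γ => (s x).1 := hsm.fst
  have hsHm : Measurable fun x : (G × H) ⧸ Γ => (s x).2 := hsm.snd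
  have margG : ∀ A : Set G, MeasurableSet A → ρG A ≤ (c * μH K₂) * μG (A ∩ K₁) := by
    intro A hA
    rw [hρGdef, Measure.map_apply hsGm hA]
    have hsub : (fun x => (s x).1) ⁻¹' A ⊆ s ⁻¹' ((A ∩ K₁) ×ˢ K₂) := by
      intro x hx
      exact ⟨⟨hx, ⟨s x, hsK x, rfl⟩⟩, ⟨s x, hsK x, rfl⟩⟩
    have hRm : MeasurableSet ((A ∩ K₁) ×ˢ K₂ : Set (G × H)) :=
      (hA.inter hK1c.isClosed.measurableSet).prod hK2c.isClosed.measurableSet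
    refine le_trans (measure_mono hsub) (le_trans (hν_le _ hRm) ?_)
    rw [hprodHdef, Measure.prod_prod]
    rw [mul_comm (μG (A ∩ K₁)) (μH K₂), ← mul_assoc]
  have margH : ∀ A : Set H, MeasurableSet A → ρH A ≤ (c * μG K₁) * μH (A ∩ K₂) := by
    intro A hA
    rw [hρHdef, Measure.map_apply hsHm hA]
    have hsub : (fun x => (s x).2) ⁻¹' A ⊆ s ⁻¹' (K₁ ×ˢ (A ∩ K₂)) := by
      intro x hx
      exact ⟨⟨s x, hsK x, rfl⟩, ⟨hx, ⟨s x, hsK x, rfl⟩⟩⟩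
    have hRm : MeasurableSet (K₁ ×ˢ (A ∩ K₂) : Set (G × H)) :=
      hK1c.isClosed.measurableSet.prod (hA.inter hK2c.isClosed.measurableSet)
    refine le_trans (measure_mono hsub) (le_trans (hν_le _ hRm) ?_)
    rw [hprodHdef, Measure.prod_prod, ← mul_assoc]
  -- uniform right-translation bound on H over the window W
  obtain ⟨V, hVc, hV1⟩ := exists_compact_mem_nhds (1 : H)
  have hVpos : 0 < μH V := μH.measure_pos_of_mem_nhds hV1
  set c₇ : ℝ≥0∞ := μH (V * W⁻¹) / μH V with hc7def
  have hc7_ne_top : c₇ ≠ ∞ :=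
    (ENNReal.div_lt_top (hVc.mul hW.inv).measure_lt_top.ne hVpos.ne').ne
  have hRT : ∀ w ∈ W, ∀ A : Set H, MeasurableSet A →
      μH ((fun h => h * w) ⁻¹' A) ≤ c₇ * μH A := by
    intro w hw A hA
    set νw : Measure H := Measure.map (fun h => h * w) μH with hνwdef
    haveI hνwinv : νw.IsMulLeftInvariant := by
      constructor
      intro g
      rw [hνwdef, Measure.map_map (measurable_const_mul g) (measurable_mul_const w)]
      have h1 : ((fun z => g * z) ∘ fun h => h * w) = (fun h => h * w) ∘ fun z => g * z := by
        funext h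
        simp [mul_assoc]
      rw [h1, ← Measure.map_map (measurable_mul_const w) (measurable_const_mul g),
        map_mul_left_eq_self μH g]
    haveI hνwfc : IsFiniteMeasureOnCompacts νw := by
      constructor
      intro D hD
      rw [hνwdef, Measure.map_apply (measurable_mul_const w) hD.isClosed.measurableSet]
      have h1 : (fun h => h * w) ⁻¹' D = (fun d => d * w⁻¹) '' D := by
        ext h
        constructor
        · intro hh
          exact ⟨h * w, hh, by group⟩
        · rintro ⟨d, hd, rfl⟩
          simpa [mul_assoc] using hd
      rw [h1]
      exact (hD.image (continuous_mul_right w⁻¹)).measure_lt_top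
    have heq := Measure.isMulLeftInvariant_eq_smul νw μH
    set r : ℝ≥0∞ := (νw.haarScalarFactor μH : ℝ≥0∞) with hrdef
    have hνwA : ∀ B : Set H, νw B = r * μH B := by
      intro B
      rw [heq]
      rfl
    have hr : r ≤ c₇ := by
      rw [hc7def, ENNReal.le_div_iff_mul_le (Or.inl hVpos.ne') (Or.inl hVc.measure_lt_top.ne)]
      have h2 : νw V ≤ μH (V * W⁻¹) := by
        rw [hνwdef, Measure.map_apply (measurable_mul_const w) hVc.isClosed.measurableSet]
        refine measure_mono fun h hh => ?_
        have : (h * w) * w⁻¹ ∈ V * W⁻¹ := mul_mem_mul hh (inv_mem_inv.mpr hw)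
        simpa [mul_assoc] using this
      calc r * μH V = νw V := (hνwA V).symm
        _ ≤ μH (V * W⁻¹) := h2
    calc μH ((fun h => h * w) ⁻¹' A)
        = νw A := by rw [hνwdef, Measure.map_apply (measurable_mul_const w) hA]
      _ = r * μH A := hνwA A
      _ ≤ c₇ * μH A := mul_le_mul_left hr _
  -- Chebyshev data
  have hφae : AEMeasurable φ mY := hφ.aemeasurable
  have hfae : AEMeasurable (fun z => ENNReal.ofReal (φ z)) mY :=
    ENNReal.measurable_ofReal.comp_aemeasurable hφae
  set I : ℝ≥0∞ := ∫⁻ z, ENNReal.ofReal (φ z) ∂mY with hIdef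
  have hI_ne_top : I ≠ ∞ := by
    have h1 : ∀ z, ENNReal.ofReal (φ z) = ‖φ z‖ₑ := fun z => by
      rw [← Real.enorm_eq_ofReal (hφ0 z)]
    rw [hIdef, lintegral_congr h1]
    exact hφ.2.ne
  -- window and constants
  set Q : Set H := K₂ * W with hQdef
  have hQc : IsCompact Q := hK2c.mul hW
  obtain ⟨n, hn⟩ := hunfold (K₁ ×ˢ Q) (hK1c.prod hQc)
  set cbig : ℝ≥0∞ := ((c * μG K₁) * c₇) * ((c * μH K₂) * (c⁻¹ * n)) with hcbigdef
  have hcbig_ne_top : cbig ≠ ∞ := by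
    refine ENNReal.mul_ne_top (ENNReal.mul_ne_top ?_ hc7_ne_top)
      (ENNReal.mul_ne_top ?_ (ENNReal.mul_ne_top ?_ (ENNReal.natCast_ne_top n)))
    · exact ENNReal.mul_ne_top hc_ne_top hK1c.measure_lt_top.ne
    · exact ENNReal.mul_ne_top hc_ne_top hK2c.measure_lt_top.ne
    · exact ENNReal.inv_ne_top.mpr hc_ne_zero
  set Ibound : ℝ≥0∞ := (1 + cbig) * I with hIbdef
  have hIb_ne_top : Ibound ≠ ∞ :=
    ENNReal.mul_ne_top (ENNReal.add_ne_top.mpr ⟨ENNReal.one_ne_top, hcbig_ne_top⟩) hI_ne_top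
  set C : ℝ := Ibound.toReal + 1 with hCdef
  have hCpos : 0 < C := by
    have := ENNReal.toReal_nonneg (a := Ibound)
    rw [hCdef]
    linarith
  have hIbC : Ibound < ENNReal.ofReal C := by
    calc Ibound = ENNReal.ofReal Ibound.toReal := (ENNReal.ofReal_toReal hIb_ne_top).symm
      _ < ENNReal.ofReal (Ibound.toReal + 1) := by
          rw [ENNReal.ofReal_lt_ofReal_iff (by positivity)]
          linarith
      _ = ENNReal.ofReal C := by rw [hCdef]
  -- the Chebyshev bad set
  set S : Set ((G × H) ⧸ Γ) := {z | C < φ z} with hSdef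
  set S' : Set ((G × H) ⧸ Γ) := toMeasurable mY S with hS'def
  have hS'm : MeasurableSet S' := measurableSet_toMeasurable mY S
  have hSS' : S ⊆ S' := subset_toMeasurable mY S
  have hmYS' : mY S' ≤ I / ENNReal.ofReal C := by
    rw [hS'def, measure_toMeasurable]
    have h1 : S ⊆ {z | ENNReal.ofReal C ≤ ENNReal.ofReal (φ z)} := fun z hz =>
      ENNReal.ofReal_le_ofReal (le_of_lt hz)
    refine le_trans (measure_mono h1) ?_
    rw [ENNReal.le_div_iff_mul_le (Or.inl (ENNReal.ofReal_pos.mpr hCpos).ne')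
      (Or.inl ENNReal.ofReal_ne_top), mul_comm]
    exact mul_meas_ge_le_lintegral₀ hfae (ENNReal.ofReal C)
  refine ⟨C, hCpos, ?_⟩
  intro γ hγ2
  -- the H-side translated section map
  have hg2m : Measurable (fun x : (G × H) ⧸ Γ => (s x).2 * (γ : G × H).2) := hsHm.mul_const _
  set σγ : Measure H := Measure.map (fun x => (s x).2 * (γ : G × H).2) mY with hσdef
  have hσ : ∀ A : Set H, MeasurableSet A → σγ A ≤ ((c * μG K₁) * c₇) * μH (A ∩ Q) := by
    intro A hA
    have hpreA : MeasurableSet ((fun h => h * (γ : G × H).2) ⁻¹' A) := measurable_mul_const _ hA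
    rw [hσdef, Measure.map_apply hg2m hA]
    have h1 : (fun x : (G × H) ⧸ Γ => (s x).2 * (γ : G × H).2) ⁻¹' A
        = (fun x => (s x).2) ⁻¹' ((fun h => h * (γ : G × H).2) ⁻¹' A) := rfl
    rw [h1, ← Measure.map_apply hsHm hpreA, ← hρHdef]
    refine le_trans (margH _ hpreA) ?_
    have h2 : ((fun h => h * (γ : G × H).2) ⁻¹' A) ∩ K₂
        ⊆ (fun h => h * (γ : G × H).2) ⁻¹' (A ∩ Q) := by
      rintro h ⟨h1', h2'⟩
      exact ⟨h1', mul_mem_mul h2' hγ2⟩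
    have h3 : μH (((fun h => h * (γ : G × H).2) ⁻¹' A) ∩ K₂) ≤ c₇ * μH (A ∩ Q) :=
      le_trans (measure_mono h2) (hRT _ hγ2 _ (hA.inter hQc.isClosed.measurableSet))
    calc (c * μG K₁) * μH (((fun h => h * (γ : G × H).2) ⁻¹' A) ∩ K₂)
        ≤ (c * μG K₁) * (c₇ * μH (A ∩ Q)) := mul_le_mul_right h3 _
      _ = ((c * μG K₁) * c₇) * μH (A ∩ Q) := by ring
  -- the distribution of the target point
  set Pmap : ((G × H) ⧸ Γ) × ((G × H) ⧸ Γ) → (G × H) ⧸ Γ :=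
    fun p => QuotientGroup.mk (((s p.2).1, (s p.1).2 * (γ : G × H).2) : G × H) with hPdef
  have hPinm : Measurable (fun p : ((G × H) ⧸ Γ) × ((G × H) ⧸ Γ) =>
      (((s p.2).1, (s p.1).2 * (γ : G × H).2) : G × H)) :=
    (hsGm.comp measurable_snd).prodMk (hg2m.comp measurable_fst)
  have hPm : Measurable Pmap := hmk_meas.comp hPinm
  have hDle : ∀ Z : Set ((G × H) ⧸ Γ), MeasurableSet Z →
      (Measure.map Pmap (mY.prod mY)) Z ≤ cbig * mY Z := by
    intro Z hZ
    haveI : IsFiniteMeasure σγ := by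
      constructor
      rw [hσdef, Measure.map_apply hg2m MeasurableSet.univ, Set.preimage_univ, measure_univ]
      exact ENNReal.one_lt_top
    have hmain : Measure.map Pmap (mY.prod mY) = Measure.map QuotientGroup.mk (ρG.prod σγ) := by
      have e1 : Pmap = (QuotientGroup.mk ∘
          (Prod.map (fun y : (G × H) ⧸ Γ => (s y).1)
            (fun x : (G × H) ⧸ Γ => (s x).2 * (γ : G × H).2))) ∘ Prod.swap := rfl
      have hprodmapm : Measurable (Prod.map (fun y : (G × H) ⧸ Γ => (s y).1)
          (fun x : (G × H) ⧸ Γ => (s x).2 * (γ : G × H).2)) := hsGm.prodMap hg2m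
      rw [e1, ← Measure.map_map (hmk_meas.comp hprodmapm) measurable_swap,
        Measure.prod_swap, ← Measure.map_map hmk_meas hprodmapm,
        ← Measure.map_prod_map _ _ hsGm hg2m, ← hρGdef, ← hσdef]
    rw [hmain, Measure.map_apply hmk_meas hZ]
    have hZ'm : MeasurableSet (QuotientGroup.mk ⁻¹' Z : Set (G × H)) := hmk_meas hZ
    have hT'm : MeasurableSet ((QuotientGroup.mk ⁻¹' Z : Set (G × H)) ∩ (Set.univ ×ˢ Q)) :=
      hZ'm.inter (MeasurableSet.univ.prod hQc.isClosed.measurableSet)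
    rw [Measure.prod_apply hZ'm]
    have hstep1 : ∫⁻ a, σγ (Prod.mk a ⁻¹' (QuotientGroup.mk ⁻¹' Z : Set (G × H))) ∂ρG
        ≤ ∫⁻ a, ((c * μG K₁) * c₇) *
            μH (Prod.mk a ⁻¹' ((QuotientGroup.mk ⁻¹' Z : Set (G × H)) ∩ (Set.univ ×ˢ Q))) ∂ρG := by
      refine lintegral_mono fun a => ?_
      have hsl : MeasurableSet (Prod.mk a ⁻¹' (QuotientGroup.mk ⁻¹' Z : Set (G × H))) :=
        measurable_prodMk_left hZ'm
      refine le_trans (hσ _ hsl) (le_of_eq ?_)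
      have he2 : (Prod.mk a ⁻¹' (QuotientGroup.mk ⁻¹' Z : Set (G × H))) ∩ Q
          = Prod.mk a ⁻¹' ((QuotientGroup.mk ⁻¹' Z : Set (G × H)) ∩ (Set.univ ×ˢ Q)) := by
        ext b
        simp [Set.mem_preimage]
      rw [he2]
    refine le_trans hstep1 ?_
    rw [lintegral_const_mul' _ _
      (ENNReal.mul_ne_top (ENNReal.mul_ne_top hc_ne_top hK1c.measure_lt_top.ne) hc7_ne_top)]
    have hρG_le : ρG ≤ (c * μH K₂) • μG.restrict K₁ := by
      refine Measure.le_iff.mpr fun A hA => ?_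
      rw [Measure.smul_apply, Measure.restrict_apply hA, smul_eq_mul]
      exact margG A hA
    have hstep3 : ∫⁻ a, μH (Prod.mk a ⁻¹' ((QuotientGroup.mk ⁻¹' Z : Set (G × H)) ∩ (Set.univ ×ˢ Q))) ∂ρG
        ≤ (c * μH K₂) * ∫⁻ a, μH (Prod.mk a ⁻¹' ((QuotientGroup.mk ⁻¹' Z : Set (G × H)) ∩ (Set.univ ×ˢ Q))) ∂(μG.restrict K₁) := by
      rw [← smul_eq_mul, ← lintegral_smul_measure]
      exact lintegral_mono' hρG_le le_rfl
    have hstep6 : ∫⁻ a, μH (Prod.mk a ⁻¹' ((QuotientGroup.mk ⁻¹' Z : Set (G × H)) ∩ (Set.univ ×ˢ Q))) ∂(μG.restrict K₁)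
        ≤ c⁻¹ * ((n : ℝ≥0∞) * mY Z) := by
      rw [← Measure.prod_apply hT'm]
      have h7 : (μG.restrict K₁).prod μH = (μG.prod μH).restrict (K₁ ×ˢ Set.univ) := by
        rw [← Measure.prod_restrict, Measure.restrict_univ]
      rw [h7, Measure.restrict_apply hT'm]
      have h8 : (QuotientGroup.mk ⁻¹' Z : Set (G × H)) ∩ (Set.univ ×ˢ Q) ∩ K₁ ×ˢ Set.univ
          ⊆ (QuotientGroup.mk ⁻¹' Z : Set (G × H)) ∩ K₁ ×ˢ Q := by
        rintro z ⟨⟨hz1, hz2⟩, hz3⟩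
        exact ⟨hz1, ⟨hz3.1, hz2.2⟩⟩
      refine le_trans (measure_mono h8) ?_
      have h9 : prodH ((QuotientGroup.mk ⁻¹' Z : Set (G × H)) ∩ K₁ ×ˢ Q)
          = c⁻¹ * lam ((QuotientGroup.mk ⁻¹' Z : Set (G × H)) ∩ K₁ ×ˢ Q) := by
        rw [hlamA, ← mul_assoc, ENNReal.inv_mul_cancel hc_ne_zero hc_ne_top, one_mul]
      rw [← hprodHdef, h9]
      exact mul_le_mul_right (hn Z hZ) _
    calc ((c * μG K₁) * c₇) * ∫⁻ a, μH (Prod.mk a ⁻¹' ((QuotientGroup.mk ⁻¹' Z : Set (G × H)) ∩ (Set.univ ×ˢ Q))) ∂ρG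
        ≤ ((c * μG K₁) * c₇) * ((c * μH K₂) * (c⁻¹ * ((n : ℝ≥0∞) * mY Z))) := by
          refine mul_le_mul_right (le_trans hstep3 (mul_le_mul_right hstep6 _)) _
      _ = cbig * mY Z := by rw [hcbigdef]; ring
  -- bad set 1 : Fubini for the conull set
  have hgmapm : Measurable (fun p : ((G × H) ⧸ Γ) × ((G × H) ⧸ Γ) =>
      (s p.1).1 * (γ : G × H).1 * ((s p.2).1)⁻¹) :=
    ((hsGm.comp measurable_fst).mul_const _).mul (hsGm.comp measurable_snd).inv
  set B₁ : Set (((G × H) ⧸ Γ) × ((G × H) ⧸ Γ)) :=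
    {p | ((s p.1).1 * (γ : G × H).1 * ((s p.2).1)⁻¹, p.1) ∈ Ωᶜ} with hB1def
  have hB1m : MeasurableSet B₁ := (hgmapm.prodMk measurable_fst) hΩm.compl
  have hB1null : (mY.prod mY) B₁ = 0 := by
    have hN'm : MeasurableSet (Prod.swap ⁻¹' Ωᶜ : Set ((((G × H) ⧸ Γ)) × G)) :=
      measurable_swap hΩm.compl
    have hN'0 : (mY.prod μG) (Prod.swap ⁻¹' Ωᶜ) = 0 := by
      rw [← Measure.map_apply measurable_swap hΩm.compl, Measure.prod_swap]
      exact hΩ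
    have hae := (Measure.measure_prod_null hN'm).mp hN'0
    refine (Measure.measure_prod_null hB1m).mpr ?_
    filter_upwards [hae] with x hx
    simp only [Pi.zero_apply] at hx ⊢
    have hx' : μG {w : G | (w, x) ∈ Ωᶜ} = 0 := hx
    have hZxm : MeasurableSet ((fun w : G => ((s x).1 * (γ : G × H).1 * w⁻¹, x)) ⁻¹' Ωᶜ) :=
      (((measurable_id.inv.const_mul _)).prodMk measurable_const) hΩm.compl
    have hsl : Prod.mk x ⁻¹' B₁
        = (fun y => (s y).1) ⁻¹' ((fun w : G => ((s x).1 * (γ : G × H).1 * w⁻¹, x)) ⁻¹' Ωᶜ) := rfl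
    have hZx0 : μG ((fun w : G => ((s x).1 * (γ : G × H).1 * w⁻¹, x)) ⁻¹' Ωᶜ) = 0 := by
      have hq' : Measure.QuasiMeasurePreserving
          (fun w : G => ((s x).1 * (γ : G × H).1) * w⁻¹) μG μG := by
        have := ((measurePreserving_mul_left μG
          ((s x).1 * (γ : G × H).1)).quasiMeasurePreserving).comp
          (quasiMeasurePreserving_inv μG)
        exact this
      have he : (fun w : G => ((s x).1 * (γ : G × H).1 * w⁻¹, x)) ⁻¹' Ωᶜ
          = (fun w : G => ((s x).1 * (γ : G × H).1) * w⁻¹) ⁻¹' {w : G | (w, x) ∈ Ωᶜ} := rfl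
      rw [he]
      exact hq'.preimage_null hx'
    rw [hsl, ← Measure.map_apply hsGm hZxm, ← hρGdef]
    refine le_antisymm ?_ zero_le
    refine le_trans (margG _ hZxm) ?_
    refine le_trans (mul_le_mul_right (measure_mono Set.inter_subset_left) _) ?_
    rw [hZx0, mul_zero]
  -- bad sets 2 and 3
  have hB2 : (mY.prod mY) (Prod.fst ⁻¹' S) ≤ mY S' := by
    refine le_trans (measure_mono (Set.preimage_mono hSS')) ?_
    rw [← Set.prod_univ, Measure.prod_prod, measure_univ, mul_one]
  have hB3 : (mY.prod mY) (Pmap ⁻¹' S) ≤ cbig * mY S' := by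
    refine le_trans (measure_mono (Set.preimage_mono hSS')) ?_
    exact le_trans (Measure.le_map_apply hPm.aemeasurable S') (hDle S' hS'm)
  -- total bound
  have htot : (mY.prod mY) (B₁ ∪ (Prod.fst ⁻¹' S ∪ Pmap ⁻¹' S)) < 1 := by
    refine lt_of_le_of_lt (measure_union_le _ _) ?_
    rw [hB1null, zero_add]
    refine lt_of_le_of_lt (measure_union_le _ _) ?_
    calc (mY.prod mY) (Prod.fst ⁻¹' S) + (mY.prod mY) (Pmap ⁻¹' S)
        ≤ mY S' + cbig * mY S' := add_le_add hB2 hB3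
      _ = (1 + cbig) * mY S' := by ring
      _ ≤ (1 + cbig) * (I / ENNReal.ofReal C) := mul_le_mul_right hmYS' _
      _ = Ibound / ENNReal.ofReal C := by rw [hIbdef, mul_div_assoc]
      _ < 1 := by
          rw [ENNReal.div_lt_iff (Or.inl (ENNReal.ofReal_pos.mpr hCpos).ne')
            (Or.inl ENNReal.ofReal_ne_top), one_mul]
          exact hIbC
  have hprod1 : (mY.prod mY) Set.univ = 1 := by
    rw [← Set.univ_prod_univ, Measure.prod_prod, measure_univ, mul_one]
  have hne : B₁ ∪ (Prod.fst ⁻¹' S ∪ Pmap ⁻¹' S) ≠ Set.univ := by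
    intro h
    rw [h, hprod1] at htot
    exact lt_irrefl _ htot
  obtain ⟨p, hp⟩ := (Set.ne_univ_iff_exists_notMem _).mp hne
  have hp1 : p ∉ B₁ := fun h => hp (Set.mem_union_left _ h)
  have hp2 : p ∉ Prod.fst ⁻¹' S := fun h => hp (Set.mem_union_right _ (Set.mem_union_left _ h))
  have hp3 : p ∉ Pmap ⁻¹' S := fun h => hp (Set.mem_union_right _ (Set.mem_union_right _ h))
  refine ⟨p.1, p.2, ?_, ?_, ?_⟩
  · have := hp1
    rw [hB1def] at this
    simpa [Set.mem_setOf_eq] using this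
  · have := hp2
    simp only [Set.mem_preimage, hSdef, Set.mem_setOf_eq, not_lt] at this
    exact this
  · have hpoint : ((((s p.1).1 * (γ : G × H).1 * ((s p.2).1)⁻¹, (1 : H)) : G × H))⁻¹ • p.1
        = Pmap p := by
      set u := s p.1 with hu
      set v := s p.2 with hv
      set b : G × H := ((u.1 * (γ : G × H).1 * (v.1)⁻¹, (1 : H)) : G × H) with hb
      have h1 : b⁻¹ • p.1 = QuotientGroup.mk (b⁻¹ * u) := by
        conv_lhs => rw [← hs p.1]
        rw [MulAction.Quotient.smul_mk, smul_eq_mul]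
      rw [hPdef, h1, QuotientGroup.eq]
      have hc2 : (b⁻¹ * u)⁻¹ * ((v.1, u.2 * (γ : G × H).2) : G × H) = (γ : G × H) := by
        apply Prod.ext
        · simp only [hb, Prod.fst_mul, Prod.fst_inv]
          group
        · simp only [hb, Prod.snd_mul, Prod.snd_inv]
          group
      rw [hc2]
      exact γ.2
    rw [hpoint]
    have := hp3
    simp only [Set.mem_preimage, hSdef, Set.mem_setOf_eq, not_lt] at this
    exact this
end

section
/- Let (G, H, Γ) be a uniform cut-and-project scheme with H almost connected, let W ⊆ H be a regular symmetric window containing 1, and let Λ = Λ(G,H,Γ,W) be the associated regular symmetric uniform model set. Let Δ ⊆ Λ be a symmetric subset containing 1 which is relatively dense in G. Then the subgroup Δ^∞ of G generated by Δ has finite index in the subgroup Λ^∞ generated by Λ. -/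
open MeasureTheory Set
open scoped Pointwise ENNReal

/-- If a nonempty open set is covered by finitely many closed sets,
one of them has nonempty interior. -/
lemma exists_interior_nonempty_of_open_subset_finite_union
    {α β : Type*} [TopologicalSpace β] {F : Set α} (hF : F.Finite) (C : α → Set β)
    (hC : ∀ f ∈ F, IsClosed (C f)) :
    ∀ U : Set β, IsOpen U → U.Nonempty → (U ⊆ ⋃ f ∈ F, C f) →
      ∃ f ∈ F, (interior (C f)).Nonempty := by
  classical
  revert hC
  refine Set.Finite.induction_on (motive := fun F _ =>
    (∀ f ∈ F, IsClosed (C f)) → ∀ U : Set β, IsOpen U → U.Nonempty → (U ⊆ ⋃ f ∈ F, C f) →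
      ∃ f ∈ F, (interior (C f)).Nonempty) F hF ?_ ?_
  · intro _ U _ hne hsub
    obtain ⟨x, hx⟩ := hne
    simpa using hsub hx
  · intro a s ha hs ih hC U hU hne hsub
    by_cases hc : (U ∩ (C a)ᶜ).Nonempty
    · have hsub' : U ∩ (C a)ᶜ ⊆ ⋃ f ∈ s, C f := by
        rintro x ⟨hxU, hxc⟩
        have := hsub hxU
        simp only [Set.mem_iUnion, Set.mem_insert_iff, exists_prop] at this ⊢
        rcases this with ⟨f, hf | hf, hxf⟩
        · exact absurd (hf ▸ hxf) hxc
        · exact ⟨f, hf, hxf⟩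
      have hCa : IsClosed (C a) := hC a (Set.mem_insert a s)
      obtain ⟨f, hf, hint⟩ := ih (fun f hf => hC f (Set.mem_insert_of_mem a hf))
        (U ∩ (C a)ᶜ) (hU.inter hCa.isOpen_compl) hc hsub'
      exact ⟨f, Set.mem_insert_of_mem a hf, hint⟩
    · have hUCa : U ⊆ C a := by
        intro x hx
        by_contra hxc
        exact hc ⟨x, hx, hxc⟩
      obtain ⟨x, hx⟩ := hne
      exact ⟨a, Set.mem_insert a s, ⟨x, interior_maximal hUCa hU hx⟩⟩

/-- For a regular symmetric uniform model set `Λ` of almost connected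
type and a symmetric relatively dense subset `Δ ⊆ Λ` containing `1`, the group `Δ^∞`
has finite index in `Λ^∞`. -/
theorem meyer_enveloping_group_finiteIndex
    (G : Type) [Group G] [TopologicalSpace G] [IsTopologicalGroup G] [T2Space G]
    [LocallyCompactSpace G] [SecondCountableTopology G]
    (H : Type) [Group H] [TopologicalSpace H] [IsTopologicalGroup H] [T2Space H]
    [LocallyCompactSpace H] [SecondCountableTopology H] [MeasurableSpace H] [BorelSpace H]
    (hH : CompactSpace (ConnectedComponents H))
    (Γ : Subgroup (G × H)) (hCP : IsCutAndProject Γ)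
    (W : Set H) (hW : IsRegularWindow H Γ W)
    (Δ : Set G) (hΔsub : Δ ⊆ modelSet Γ W) (hΔsym : Δ⁻¹ = Δ) (hΔ1 : (1 : G) ∈ Δ)
    (hΔrd : RelativelyDense Δ) :
    (Subgroup.closure Δ).relIndex (Subgroup.closure (modelSet Γ W)) ≠ 0 := by
  classical
  obtain ⟨hLat, hInj, hDense⟩ := hCP
  haveI hΓdisc : DiscreteTopology Γ := hLat.1
  obtain ⟨hWc, hWsym, hW1, -⟩ := hW
  obtain ⟨K₀, hK₀c, hK₀u⟩ := hΔrd
  obtain ⟨V₁, hV₁c, hV₁n⟩ := exists_compact_mem_nhds (1 : H)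
  have h1V₁ : (1 : H) ∈ interior V₁ := mem_interior_iff_mem_nhds.mpr hV₁n
  have hV₁1 : (1 : H) ∈ V₁ := interior_subset h1V₁
  set φ : ↥Γ →* G := (MonoidHom.fst G H).comp Γ.subtype with hφdef
  set ψ : ↥Γ →* H := (MonoidHom.snd G H).comp Γ.subtype with hψdef
  set D : Subgroup G := Subgroup.closure Δ with hDdef
  set Ξ : Subgroup ↥Γ := D.comap φ with hΞdef
  set S : Subgroup H := (Ξ.map ψ).topologicalClosure with hSdef
  have hSclosed : IsClosed (S : Set H) := Subgroup.isClosed_topologicalClosure _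
  have hξS : ∀ ξ : ↥Γ, ξ ∈ Ξ → ((ξ : G × H).2) ∈ S := fun ξ hξ =>
    Subgroup.le_topologicalClosure _ (Subgroup.mem_map_of_mem ψ hξ)
  -- inverses stay in Δ and W
  have hinvΔ : ∀ δ ∈ Δ, δ⁻¹ ∈ Δ := fun δ hδ => by
    rw [← hΔsym]; exact Set.inv_mem_inv.mpr hδ
  have hinvW : ∀ w ∈ W, w⁻¹ ∈ W := fun w hw => by
    rw [← hWsym]; exact Set.inv_mem_inv.mpr hw
  -- lifting elements of Δ to Ξ
  have hlift : ∀ δ ∈ Δ, ∃ x : ↥Γ, x ∈ Ξ ∧ (x : G × H).1 = δ ∧ (x : G × H).2 ∈ W := by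
    intro δ hδ
    obtain ⟨p, ⟨hpΓ, hpW⟩, hp1⟩ := hΔsub hδ
    refine ⟨⟨p, hpΓ⟩, ?_, hp1, hpW.2⟩
    refine Subgroup.mem_comap.mpr ?_
    show p.1 ∈ D
    rw [hp1]
    exact Subgroup.subset_closure hδ
  -- relative density of Δ, in the convenient form
  have hcov : ∀ g : G, ∃ δ ∈ Δ, ∃ k ∈ K₀, g = k⁻¹ * δ⁻¹ := by
    intro g
    have hg : g⁻¹ ∈ Δ * K₀ := by rw [hK₀u]; trivial
    obtain ⟨δ, hδ, k, hk, hδk⟩ := hg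
    have hδk' : δ * k = g⁻¹ := hδk
    refine ⟨δ, hδ, k, hk, ?_⟩
    rw [← mul_inv_rev, hδk', inv_inv]
  -- relative density of Ξ in G × S
  have hrd : ∀ (g : G) (s : H), s ∈ S → ∃ x : ↥Γ, x ∈ Ξ ∧
      g * ((x : G × H).1)⁻¹ ∈ K₀⁻¹ ∧ s * ((x : G × H).2)⁻¹ ∈ V₁ * W := by
    intro g s hs
    have hsc : s ∈ closure ((Ξ.map ψ : Subgroup H) : Set H) := by
      rw [← Subgroup.topologicalClosure_coe]; exact hs
    have hO : IsOpen {h : H | s * h⁻¹ ∈ interior V₁} :=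
      isOpen_interior.preimage (continuous_const.mul continuous_inv)
    have hsO : s ∈ {h : H | s * h⁻¹ ∈ interior V₁} := by
      simp only [Set.mem_setOf_eq, mul_inv_cancel]; exact h1V₁
    obtain ⟨y, hyO, hym⟩ := _root_.mem_closure_iff.mp hsc _ hO hsO
    obtain ⟨x₁, hx₁Ξ, hx₁y⟩ := Subgroup.mem_map.mp hym
    obtain ⟨δ, hδ, k, hk, hgk⟩ := hcov (g * ((x₁ : G × H).1)⁻¹)
    obtain ⟨xδ, hxδΞ, hxδ1, hxδ2⟩ := hlift δ⁻¹ (hinvΔ δ hδ)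
    refine ⟨xδ * x₁, Ξ.mul_mem hxδΞ hx₁Ξ, ?_, ?_⟩
    · have h1 : ((xδ * x₁ : ↥Γ) : G × H).1 = δ⁻¹ * (x₁ : G × H).1 := by
        rw [Subgroup.coe_mul, Prod.fst_mul, hxδ1]
      rw [h1, mul_inv_rev, inv_inv, ← mul_assoc, hgk, mul_assoc, inv_mul_cancel, mul_one]
      exact Set.inv_mem_inv.mpr hk
    · have h2 : ((xδ * x₁ : ↥Γ) : G × H).2 = (xδ : G × H).2 * y := by
        rw [Subgroup.coe_mul, Prod.snd_mul, ← hx₁y]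
        rfl
      rw [h2, mul_inv_rev, ← mul_assoc]
      exact Set.mul_mem_mul (interior_subset hyO) (hinvW _ hxδ2)
  -- the finite set F
  set K₂ : Set (G × H) := K₀⁻¹ ×ˢ (V₁ * (V₁ * W)) with hK₂def
  have hK₂c : IsCompact K₂ := (hK₀c.inv).prod (hV₁c.mul (hV₁c.mul hWc))
  have hΓclosed : IsClosed (Γ : Set (G × H)) := Subgroup.isClosed_of_discrete
  set F : Set (G × H) := (Γ : Set (G × H)) ∩ K₂ with hFdef
  have hFc : IsCompact F := hK₂c.inter_left hΓclosed
  haveI hdiscΓset : DiscreteTopology ↥(Γ : Set (G × H)) := hΓdisc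
  have hFfin : F.Finite := hFc.finite
    (isDiscrete_iff_discreteTopology.mpr (DiscreteTopology.of_subset hdiscΓset Set.inter_subset_left))
  -- the key step: points of Γ whose H-part is in V₁ * S lie in F * Ξ
  have hstep : ∀ x : ↥Γ, (x : G × H).2 ∈ (V₁ : Set H) * (S : Set H) →
      ∃ ξ ∈ Ξ, ((x * ξ⁻¹ : ↥Γ) : G × H) ∈ F := by
    intro x hx2
    obtain ⟨v, hv, s, hs, hvs⟩ := hx2
    obtain ⟨ξ, hξΞ, hξ1, hξ2⟩ := hrd (x : G × H).1 s hs
    refine ⟨ξ, hξΞ, SetLike.coe_mem _, ?_⟩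
    rw [Set.mem_prod]
    constructor
    · show ((x * ξ⁻¹ : ↥Γ) : G × H).1 ∈ K₀⁻¹
      rw [Subgroup.coe_mul, Subgroup.coe_inv, Prod.fst_mul, Prod.fst_inv]
      exact hξ1
    · show ((x * ξ⁻¹ : ↥Γ) : G × H).2 ∈ V₁ * (V₁ * W)
      rw [Subgroup.coe_mul, Subgroup.coe_inv, Prod.snd_mul, Prod.snd_inv, ← hvs, mul_assoc]
      exact Set.mul_mem_mul hv hξ2
  -- openness of S
  have hSopen : IsOpen (S : Set H) := by
    set U : Set H := interior V₁ * (S : Set H) with hUdef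
    have hUopen : IsOpen U := isOpen_interior.mul_right
    have hUne : U.Nonempty := ⟨1, by simpa using Set.mul_mem_mul h1V₁ S.one_mem⟩
    set Cf : (G × H) → Set H := fun f => (fun z => (f.2)⁻¹ * z) ⁻¹' (S : Set H) with hCfdef
    have hCfclosed : ∀ f ∈ F, IsClosed (Cf f) := fun f _ =>
      hSclosed.preimage (continuous_const.mul continuous_id)
    have hTsub : U ⊆ ⋃ f ∈ F, Cf f := by
      have hclosed : IsClosed (⋃ f ∈ F, Cf f) := hFfin.isClosed_biUnion hCfclosed
      intro u hu
      have hu' : u ∈ closure ((Prod.snd '' (Γ : Set (G × H))) ∩ U) := by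
        rw [_root_.mem_closure_iff]
        intro o ho huo
        obtain ⟨t, ⟨hto, htU⟩, htT⟩ :=
          hDense.inter_open_nonempty (o ∩ U) (ho.inter hUopen) ⟨u, huo, hu⟩
        exact ⟨t, hto, htT, htU⟩
      refine (closure_minimal ?_ hclosed) hu'
      rintro y ⟨⟨p, hpΓ, hpy⟩, hyU⟩
      have hyVS : ((⟨p, hpΓ⟩ : ↥Γ) : G × H).2 ∈ (V₁ : Set H) * (S : Set H) := by
        show p.2 ∈ (V₁ : Set H) * (S : Set H)
        rw [hpy]
        exact Set.mul_subset_mul_right interior_subset hyU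
      obtain ⟨ξ, hξΞ, hfF⟩ := hstep ⟨p, hpΓ⟩ hyVS
      refine Set.mem_biUnion hfF ?_
      show ((((⟨p, hpΓ⟩ : ↥Γ) * ξ⁻¹ : ↥Γ) : G × H).2)⁻¹ * y ∈ (S : Set H)
      have hcalc : (((⟨p, hpΓ⟩ : ↥Γ) * ξ⁻¹ : ↥Γ) : G × H).2 = p.2 * ((ξ : G × H).2)⁻¹ := by
        rw [Subgroup.coe_mul, Subgroup.coe_inv, Prod.snd_mul, Prod.snd_inv]
      rw [hcalc, ← hpy, mul_inv_rev, inv_inv, mul_assoc, inv_mul_cancel, mul_one]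
      exact hξS ξ hξΞ
    obtain ⟨f, hfF, z, hz⟩ :=
      exists_interior_nonempty_of_open_subset_finite_union hFfin Cf hCfclosed
        U hUopen hUne hTsub
    have hznhds : Cf f ∈ nhds z := mem_interior_iff_mem_nhds.mp hz
    have hcont : ContinuousAt (fun y : H => f.2 * y) (f.2⁻¹ * z) :=
      (continuous_const.mul continuous_id).continuousAt
    have hpre : (fun y : H => f.2 * y) ⁻¹' (Cf f) ∈ nhds (f.2⁻¹ * z) := by
      refine hcont.preimage_mem_nhds ?_
      rw [mul_inv_cancel_left]
      exact hznhds
    have hSnhds : (S : Set H) ∈ nhds (f.2⁻¹ * z) := by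
      have heq : (fun y : H => f.2 * y) ⁻¹' (Cf f) = (S : Set H) := by
        ext w
        simp [Cf, inv_mul_cancel_left]
      rwa [heq] at hpre
    exact Subgroup.isOpen_of_mem_nhds S hSnhds
  -- H ⧸ S is finite
  haveI hSdisc : DiscreteTopology (H ⧸ S) := QuotientGroup.discreteTopology hSopen
  have hmkc : Continuous (QuotientGroup.mk : H → H ⧸ S) := QuotientGroup.continuous_mk
  haveI : CompactSpace (H ⧸ S) := by
    constructor
    have hsurj : Function.Surjective hmkc.connectedComponentsLift := by
      intro q
      obtain ⟨x, rfl⟩ := QuotientGroup.mk_surjective q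
      exact ⟨ConnectedComponents.mk x, hmkc.connectedComponentsLift_apply_coe x⟩
    rw [← Set.range_eq_univ.mpr hsurj]
    exact isCompact_range hmkc.connectedComponentsLift_continuous
  haveI hQfin : Finite (H ⧸ S) := finite_of_compact_of_discrete
  -- the quotient ↥Γ ⧸ Ξ is finite
  have hfinF' : (Set.Finite {x : ↥Γ | (x : G × H) ∈ F}) := by
    have heq : {x : ↥Γ | (x : G × H) ∈ F} = (fun x : ↥Γ => (x : G × H)) ⁻¹' F := rfl
    rw [heq]
    exact Set.Finite.preimage (Set.injOn_of_injective Subtype.coe_injective) hFfin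
  haveI : Finite ↥{x : ↥Γ | (x : G × H) ∈ F} := hfinF'.to_subtype
  have hquotfin : Finite (↥Γ ⧸ Ξ) := by
    set fc : H ⧸ S → ↥Γ := fun c =>
      if h : ∃ x : ↥Γ, (QuotientGroup.mk ((x : G × H).2) : H ⧸ S) = c then h.choose else 1
      with hfcdef
    refine Finite.of_surjective
      (f := fun pr : (H ⧸ S) × {x : ↥Γ // x ∈ {x : ↥Γ | (x : G × H) ∈ F}} =>
        (QuotientGroup.mk (fc pr.1 * (pr.2 : ↥Γ)) : ↥Γ ⧸ Ξ)) ?_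
    intro q
    obtain ⟨γ, rfl⟩ := QuotientGroup.mk_surjective q
    set c := (QuotientGroup.mk ((γ : G × H).2) : H ⧸ S) with hcdef
    have hex : ∃ x : ↥Γ, (QuotientGroup.mk ((x : G × H).2) : H ⧸ S) = c := ⟨γ, rfl⟩
    have hfc : (QuotientGroup.mk (((fc c) : G × H).2) : H ⧸ S) = c := by
      rw [hfcdef]
      simp only [dif_pos hex]
      exact hex.choose_spec
    have hws : (((fc c) : G × H).2)⁻¹ * (γ : G × H).2 ∈ S :=
      QuotientGroup.eq.mp (hfc.trans hcdef)
    have h2 : (((fc c)⁻¹ * γ : ↥Γ) : G × H).2 ∈ (V₁ : Set H) * (S : Set H) := by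
      have hcalc : (((fc c)⁻¹ * γ : ↥Γ) : G × H).2 = (((fc c) : G × H).2)⁻¹ * (γ : G × H).2 := by
        rw [Subgroup.coe_mul, Subgroup.coe_inv, Prod.snd_mul, Prod.snd_inv]
      rw [hcalc]
      have := Set.mul_mem_mul hV₁1 hws
      rwa [one_mul] at this
    obtain ⟨ξ, hξΞ, hfF⟩ := hstep ((fc c)⁻¹ * γ) h2
    refine ⟨⟨c, ⟨(fc c)⁻¹ * γ * ξ⁻¹, hfF⟩⟩, ?_⟩
    show (QuotientGroup.mk (fc c * ((fc c)⁻¹ * γ * ξ⁻¹)) : ↥Γ ⧸ Ξ) = QuotientGroup.mk γ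
    rw [QuotientGroup.eq]
    have hcalc2 : (fc c * ((fc c)⁻¹ * γ * ξ⁻¹))⁻¹ * γ = ξ := by group
    rw [hcalc2]
    exact hξΞ
  -- conclusion
  haveI := hquotfin
  have hidx : (D.comap φ).index ≠ 0 := Subgroup.index_ne_zero_of_finite
  rw [Subgroup.index_comap] at hidx
  have hle : Subgroup.closure (modelSet Γ W) ≤ φ.range := by
    rw [Subgroup.closure_le]
    rintro g ⟨p, ⟨hpΓ, -⟩, rfl⟩
    exact ⟨⟨p, hpΓ⟩, rfl⟩
  intro h0
  exact hidx (Subgroup.relIndex_eq_zero_of_le_right hle h0)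
end
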